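/- arXiv:math/0505664 — 4 statements merged into one kernel-verified Lean document; each statement's English description precedes it below -/
import Mathlib

section
/- Let A = diag(a₁, A₋) be a diagonal matrix in M_N(ℂ) with first entry a₁ and remaining (N−1)×(N−1) diagonal block A₋, and let B be Hermitian. Writing, for U ∈ U(N), the conjugate B̃ = U B U* in block form with (1,1) entry b̃₁₁ and lower-right (N−1)×(N−1) block B̃₋₋, one has I_N(A,B) = ∫_{U(N)} exp(N a₁ b̃₁₁) · I_{N−1}((N/(N−1))·A₋, B̃₋₋) dm_N(U). -/
open MeasureTheory Matrix
open scoped BigOperators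

noncomputable instance unitaryGroupMeasurableSpace (n : ℕ) :
    MeasurableSpace (Matrix.unitaryGroup (Fin n) ℂ) := borel _

instance unitaryGroupBorelSpace (n : ℕ) :
    BorelSpace (Matrix.unitaryGroup (Fin n) ℂ) := ⟨rfl⟩

/-- The Itzykson–Zuber integral `∫ exp(N·Re Tr(A U B U*)) dμ(U)`. -/
noncomputable def IZ (N : ℕ) (μ : Measure (Matrix.unitaryGroup (Fin N) ℂ))
    (A B : Matrix (Fin N) (Fin N) ℂ) : ℝ :=
  ∫ U : Matrix.unitaryGroup (Fin N) ℂ,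
    Real.exp (N * (Matrix.trace (A * (U : Matrix (Fin N) (Fin N) ℂ) * B *
      star (U : Matrix (Fin N) (Fin N) ℂ))).re) ∂μ

/-- `μ` is a bi-invariant (Haar) probability measure on the unitary group. -/
def IsHaarProb (N : ℕ) (μ : Measure (Matrix.unitaryGroup (Fin N) ℂ)) : Prop :=
  IsProbabilityMeasure μ ∧
  (∀ V : Matrix.unitaryGroup (Fin N) ℂ, μ.map (fun U => V * U) = μ) ∧
  (∀ V : Matrix.unitaryGroup (Fin N) ℂ, μ.map (fun U => U * V) = μ)

/-! ### Auxiliary material -/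

namespace IZaux

instance (n : ℕ) : SecondCountableTopology (Matrix (Fin n) (Fin n) ℂ) :=
  inferInstanceAs (SecondCountableTopology (Fin n → Fin n → ℂ))

instance (n : ℕ) : SecondCountableTopology (Matrix.unitaryGroup (Fin n) ℂ) :=
  TopologicalSpace.Subtype.secondCountableTopology _

lemma isCompact_unitaryGroup (n : ℕ) :
    IsCompact ((Matrix.unitaryGroup (Fin n) ℂ : Set (Matrix (Fin n) (Fin n) ℂ))) := by
  have hsub : (Matrix.unitaryGroup (Fin n) ℂ : Set (Matrix (Fin n) (Fin n) ℂ)) ⊆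
      Set.univ.pi fun _ : Fin n => Set.univ.pi fun _ : Fin n => Metric.closedBall (0 : ℂ) 1 := by
    intro U hU
    have h1 : star U * U = 1 := (Unitary.mem_iff.mp hU).1
    intro i _
    intro j _
    have hdiag : ((star U * U) j j) = 1 := by rw [h1]; simp [Matrix.one_apply]
    rw [Matrix.mul_apply] at hdiag
    have hsum : (∑ k, (Complex.normSq (U k j) : ℂ)) = 1 := by
      rw [← hdiag]
      refine Finset.sum_congr rfl fun k _ => ?_
      simp [Matrix.star_apply, Complex.normSq_eq_conj_mul_self]
    have hsumre : (∑ k, Complex.normSq (U k j)) = 1 := by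
      have := congrArg Complex.re hsum
      simpa using this
    have hle : Complex.normSq (U i j) ≤ 1 := by
      rw [← hsumre]
      exact Finset.single_le_sum (f := fun k => Complex.normSq (U k j))
        (fun k _ => Complex.normSq_nonneg _) (Finset.mem_univ i)
    have habs : ‖U i j‖ ≤ 1 := by
      have h2 : ‖U i j‖ ^ 2 ≤ 1 := by rwa [Complex.sq_norm]
      nlinarith [norm_nonneg (U i j)]
    simpa [Complex.dist_eq] using habs
  have hcpt : IsCompact (Set.univ.pi fun _ : Fin n =>
      Set.univ.pi fun _ : Fin n => Metric.closedBall (0 : ℂ) 1) :=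
    isCompact_univ_pi fun _ => isCompact_univ_pi fun _ => isCompact_closedBall _ _
  have hclosed : IsClosed ((Matrix.unitaryGroup (Fin n) ℂ : Set (Matrix (Fin n) (Fin n) ℂ))) := by
    have : (Matrix.unitaryGroup (Fin n) ℂ : Set (Matrix (Fin n) (Fin n) ℂ)) =
        ((fun U : Matrix (Fin n) (Fin n) ℂ => star U * U) ⁻¹' {1}) ∩
        ((fun U : Matrix (Fin n) (Fin n) ℂ => U * star U) ⁻¹' {1}) := by
      ext U
      simp [Unitary.mem_iff, Set.mem_preimage, and_comm]
    rw [this]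
    refine IsClosed.inter ?_ ?_
    · exact isClosed_singleton.preimage
        ((continuous_id.matrix_conjTranspose.matrix_mul continuous_id))
    · exact isClosed_singleton.preimage
        ((continuous_id.matrix_mul continuous_id.matrix_conjTranspose))
  exact hcpt.of_isClosed_subset hclosed hsub

instance (n : ℕ) : CompactSpace (Matrix.unitaryGroup (Fin n) ℂ) :=
  isCompact_iff_compactSpace.mp (isCompact_unitaryGroup n)

/-- A continuous real function on a compact space is integrable w.r.t. a finite measure. -/
lemma integrable_of_cont {X : Type*} [TopologicalSpace X] [CompactSpace X]
    [MeasurableSpace X] [OpensMeasurableSpace X]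
    (μ : Measure X) [IsFiniteMeasure μ] {f : X → ℝ} (hf : Continuous f) :
    Integrable f μ := by
  obtain ⟨C, hC⟩ := (isCompact_univ (X := X)).exists_bound_of_continuousOn hf.continuousOn
  exact (integrable_const C).mono' hf.aestronglyMeasurable
    (Filter.Eventually.of_forall fun x => hC x trivial)

variable {N : ℕ}

/-- Embed an `N×N` matrix as the lower-right block of an `(N+1)×(N+1)` matrix,
with `1` in the top-left corner. -/
def embMat (V : Matrix (Fin N) (Fin N) ℂ) : Matrix (Fin (N + 1)) (Fin (N + 1)) ℂ :=
  Matrix.of (Fin.cons (Fin.cons 1 0) (fun i => Fin.cons 0 (V i)))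

@[simp] lemma embMat_zero_zero (V : Matrix (Fin N) (Fin N) ℂ) : embMat V 0 0 = 1 := rfl
@[simp] lemma embMat_zero_succ (V : Matrix (Fin N) (Fin N) ℂ) (j : Fin N) :
    embMat V 0 j.succ = 0 := by simp [embMat]
@[simp] lemma embMat_succ_zero (V : Matrix (Fin N) (Fin N) ℂ) (i : Fin N) :
    embMat V i.succ 0 = 0 := by simp [embMat]
@[simp] lemma embMat_succ_succ (V : Matrix (Fin N) (Fin N) ℂ) (i j : Fin N) :
    embMat V i.succ j.succ = V i j := by simp [embMat]

lemma embMat_conjTranspose (V : Matrix (Fin N) (Fin N) ℂ) :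
    (embMat V)ᴴ = embMat Vᴴ := by
  ext i j
  refine Fin.cases ?_ (fun i => ?_) i <;> refine Fin.cases ?_ (fun j => ?_) j <;>
    simp [conjTranspose_apply]

lemma embMat_mul (V W : Matrix (Fin N) (Fin N) ℂ) :
    embMat V * embMat W = embMat (V * W) := by
  ext i j
  rw [mul_apply, Fin.sum_univ_succ]
  refine Fin.cases ?_ (fun i => ?_) i <;> refine Fin.cases ?_ (fun j => ?_) j <;>
    simp [mul_apply]

lemma embMat_one : embMat (1 : Matrix (Fin N) (Fin N) ℂ) = 1 := by
  ext i j
  refine Fin.cases ?_ (fun i => ?_) i <;> refine Fin.cases ?_ (fun j => ?_) j <;>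
    simp [one_apply, Fin.succ_ne_zero, (Fin.succ_ne_zero _).symm, Fin.succ_inj]

/-- The embedding `U(N) → U(N+1)`, `V ↦ diag(1, V)`. -/
def Ev (V : Matrix.unitaryGroup (Fin N) ℂ) : Matrix.unitaryGroup (Fin (N + 1)) ℂ :=
  ⟨embMat (V : Matrix (Fin N) (Fin N) ℂ), by
    rw [Matrix.mem_unitaryGroup_iff]
    have h := Matrix.mem_unitaryGroup_iff.mp V.2
    rw [Matrix.star_eq_conjTranspose, embMat_conjTranspose, embMat_mul,
      ← Matrix.star_eq_conjTranspose, h, embMat_one]⟩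

@[simp] lemma Ev_coe (V : Matrix.unitaryGroup (Fin N) ℂ) :
    (Ev V : Matrix (Fin (N + 1)) (Fin (N + 1)) ℂ) = embMat V := rfl

lemma continuous_Ev : Continuous (Ev (N := N)) := by
  have h1 : Continuous (fun V : Matrix.unitaryGroup (Fin N) ℂ =>
      embMat (V : Matrix (Fin N) (Fin N) ℂ)) := by
    refine continuous_matrix fun i j => ?_
    refine Fin.cases ?_ (fun i => ?_) i
    · refine Fin.cases ?_ (fun j => ?_) j
      · simp only [embMat_zero_zero]; exact continuous_const
      · simp only [embMat_zero_succ]; exact continuous_const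
    · refine Fin.cases ?_ (fun j => ?_) j
      · simp only [embMat_succ_zero]; exact continuous_const
      · simp only [embMat_succ_succ]
        exact Continuous.matrix_elem continuous_subtype_val i j
  exact h1.subtype_mk _

lemma conj_zero_zero (V : Matrix (Fin N) (Fin N) ℂ)
    (M : Matrix (Fin (N + 1)) (Fin (N + 1)) ℂ) :
    (embMat V * M * (embMat V)ᴴ) 0 0 = M 0 0 := by
  rw [mul_apply, Fin.sum_univ_succ]
  simp [mul_apply, Fin.sum_univ_succ, embMat_conjTranspose]

lemma conj_succ_succ (V : Matrix (Fin N) (Fin N) ℂ)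
    (M : Matrix (Fin (N + 1)) (Fin (N + 1)) ℂ) (i j : Fin N) :
    (embMat V * M * (embMat V)ᴴ) i.succ j.succ
      = (V * (M.submatrix Fin.succ Fin.succ) * Vᴴ) i j := by
  rw [embMat_conjTranspose, mul_apply, mul_apply, Fin.sum_univ_succ]
  simp only [embMat_succ_succ, embMat_zero_succ, mul_zero, zero_add]
  congr 1
  ext l
  rw [mul_apply, mul_apply, Fin.sum_univ_succ]
  simp [mul_apply]

lemma trace_diagonal_mul {n : ℕ} (c : Fin n → ℂ) (P : Matrix (Fin n) (Fin n) ℂ) :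
    Matrix.trace (Matrix.diagonal c * P) = ∑ i, c i * P i i := by
  simp [Matrix.trace, Matrix.diag, Matrix.mul_apply, Matrix.diagonal_apply, ite_mul]

/-- The key Haar-invariance + Fubini step. -/
lemma haar_step (μ : Measure (Matrix.unitaryGroup (Fin (N + 1)) ℂ))
    (ν : Measure (Matrix.unitaryGroup (Fin N) ℂ))
    (hμ : IsHaarProb (N + 1) μ) (hν : IsHaarProb N ν)
    {F : Matrix.unitaryGroup (Fin (N + 1)) ℂ → ℝ} (hF : Continuous F) :
    ∫ U, F U ∂μ = ∫ U, ∫ V, F (Ev V * U) ∂ν ∂μ := by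
  haveI := hμ.1
  haveI := hν.1
  have hG : Continuous (fun p : Matrix.unitaryGroup (Fin N) ℂ ×
      Matrix.unitaryGroup (Fin (N + 1)) ℂ => F (Ev p.1 * p.2)) :=
    hF.comp ((continuous_Ev.comp continuous_fst).mul continuous_snd)
  have hInt : Integrable (Function.uncurry fun V U => F (Ev V * U)) (ν.prod μ) :=
    integrable_of_cont _ hG
  have h1 : ∀ V : Matrix.unitaryGroup (Fin N) ℂ,
      (∫ U, F (Ev V * U) ∂μ) = ∫ U, F U ∂μ := by
    intro V
    conv_rhs => rw [← hμ.2.1 (Ev V)]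
    rw [integral_map ((continuous_mul_left (Ev V)).measurable.aemeasurable)
      hF.aestronglyMeasurable]
  have h2 : (∫ U, F U ∂μ) = ∫ V, ∫ U, F (Ev V * U) ∂μ ∂ν := by
    simp only [h1]
    simp
  rw [h2, MeasureTheory.integral_integral_swap hInt]

end IZaux

open IZaux

/-- One step of the rank reduction: for `A = diag(a₁, A₋)` diagonal and `B` Hermitian of
size `N+1`, writing `B̃ = U B U*` with `(1,1)`-entry `b̃₁₁` and lower-right block `B̃₋₋`,
`I_{N+1}(A,B) = ∫_{U(N+1)} exp((N+1)·a₁·b̃₁₁) · I_N((N+1)/N · A₋, B̃₋₋) dm(U)`. -/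
theorem IZ_one_step (N : ℕ) (hN : 0 < N)
    (μ : Measure (Matrix.unitaryGroup (Fin (N + 1)) ℂ))
    (ν : Measure (Matrix.unitaryGroup (Fin N) ℂ))
    (hμ : IsHaarProb (N + 1) μ) (hν : IsHaarProb N ν)
    (a : Fin (N + 1) → ℝ)
    (B : Matrix (Fin (N + 1)) (Fin (N + 1)) ℂ) (hB : B.IsHermitian) :
    IZ (N + 1) μ (Matrix.diagonal (fun i => (a i : ℂ))) B
      = ∫ U : Matrix.unitaryGroup (Fin (N + 1)) ℂ,
          Real.exp ((N + 1 : ℝ) * a 0 *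
              (((U : Matrix (Fin (N + 1)) (Fin (N + 1)) ℂ) * B
                * star (U : Matrix (Fin (N + 1)) (Fin (N + 1)) ℂ)) 0 0).re) *
            IZ N ν
              (((N + 1 : ℂ) / (N : ℂ)) • Matrix.diagonal (fun i : Fin N => (a i.succ : ℂ)))
              ((((U : Matrix (Fin (N + 1)) (Fin (N + 1)) ℂ) * B
                * star (U : Matrix (Fin (N + 1)) (Fin (N + 1)) ℂ)).submatrix
                  Fin.succ Fin.succ)) ∂μ := by
  classical
  set A : Matrix (Fin (N + 1)) (Fin (N + 1)) ℂ := Matrix.diagonal (fun i => (a i : ℂ)) with hA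
  -- the integrand of the left-hand side
  set F : Matrix.unitaryGroup (Fin (N + 1)) ℂ → ℝ := fun U =>
    Real.exp (((N + 1 : ℕ) : ℝ) * (Matrix.trace (A * (U : Matrix (Fin (N + 1)) (Fin (N + 1)) ℂ)
      * B * star (U : Matrix (Fin (N + 1)) (Fin (N + 1)) ℂ))).re) with hF
  have hcoe : Continuous (fun U : Matrix.unitaryGroup (Fin (N + 1)) ℂ =>
      (U : Matrix (Fin (N + 1)) (Fin (N + 1)) ℂ)) := continuous_subtype_val
  have hFc : Continuous F := by
    apply Real.continuous_exp.comp
    apply Continuous.mul continuous_const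
    exact Complex.continuous_re.comp
      ((((continuous_const.matrix_mul hcoe).matrix_mul continuous_const).matrix_mul
        hcoe.matrix_conjTranspose).matrix_trace)
  have key := haar_step μ ν hμ hν hFc
  have hLHS : IZ (N + 1) μ A B = ∫ U, F U ∂μ := rfl
  rw [hLHS, key]
  refine integral_congr_ae (Filter.Eventually.of_forall fun U => ?_)
  -- now fix U and compute the inner integral
  set M : Matrix (Fin (N + 1)) (Fin (N + 1)) ℂ :=
    (U : Matrix (Fin (N + 1)) (Fin (N + 1)) ℂ) * B *
      star (U : Matrix (Fin (N + 1)) (Fin (N + 1)) ℂ) with hM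
  have hNR : ((N : ℝ)) ≠ 0 := Nat.cast_ne_zero.mpr hN.ne'
  -- pointwise description of F (Ev V * U)
  have hpt : ∀ V : Matrix.unitaryGroup (Fin N) ℂ,
      F (Ev V * U) = Real.exp ((N + 1 : ℝ) * a 0 * (M 0 0).re) *
        Real.exp (((N : ℝ)) * ((((N + 1 : ℂ) / (N : ℂ)) • Matrix.diagonal
            (fun i : Fin N => (a i.succ : ℂ)) *
          (V : Matrix (Fin N) (Fin N) ℂ) * (M.submatrix Fin.succ Fin.succ) *
          star (V : Matrix (Fin N) (Fin N) ℂ)).trace).re) := by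
    intro V
    have hcoemul : ((Ev V * U : Matrix.unitaryGroup (Fin (N + 1)) ℂ) :
        Matrix (Fin (N + 1)) (Fin (N + 1)) ℂ) =
        embMat (V : Matrix (Fin N) (Fin N) ℂ) * (U : Matrix (Fin (N + 1)) (Fin (N + 1)) ℂ) := rfl
    have hW : embMat (V : Matrix (Fin N) (Fin N) ℂ) *
        (U : Matrix (Fin (N + 1)) (Fin (N + 1)) ℂ) * B *
        star (embMat (V : Matrix (Fin N) (Fin N) ℂ) *
          (U : Matrix (Fin (N + 1)) (Fin (N + 1)) ℂ)) =
        embMat (V : Matrix (Fin N) (Fin N) ℂ) * M *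
          (embMat (V : Matrix (Fin N) (Fin N) ℂ))ᴴ := by
      rw [StarMul.star_mul, hM, Matrix.star_eq_conjTranspose]
      noncomm_ring
    -- LHS trace computation
    have htr : (Matrix.trace (A * (embMat (V : Matrix (Fin N) (Fin N) ℂ) * M *
        (embMat (V : Matrix (Fin N) (Fin N) ℂ))ᴴ))).re
        = a 0 * (M 0 0).re + ∑ i : Fin N, a i.succ *
          (((V : Matrix (Fin N) (Fin N) ℂ) * (M.submatrix Fin.succ Fin.succ) *
            (V : Matrix (Fin N) (Fin N) ℂ)ᴴ) i i).re := by
      rw [hA, trace_diagonal_mul, Fin.sum_univ_succ]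
      rw [conj_zero_zero]
      simp only [conj_succ_succ, Complex.add_re, Complex.re_ofReal_mul]
      rw [Complex.re_sum]
      simp [Complex.re_ofReal_mul]
    -- RHS trace computation
    have htr2 : (((N + 1 : ℂ) / (N : ℂ)) • Matrix.diagonal (fun i : Fin N => (a i.succ : ℂ)) *
          (V : Matrix (Fin N) (Fin N) ℂ) * (M.submatrix Fin.succ Fin.succ) *
          star (V : Matrix (Fin N) (Fin N) ℂ)).trace
        = ((N + 1 : ℂ) / (N : ℂ)) * ∑ i : Fin N, (a i.succ : ℂ) *
            (((V : Matrix (Fin N) (Fin N) ℂ) * (M.submatrix Fin.succ Fin.succ) *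
              (V : Matrix (Fin N) (Fin N) ℂ)ᴴ) i i) := by
      rw [Matrix.star_eq_conjTranspose, Matrix.smul_mul, Matrix.smul_mul, Matrix.smul_mul,
        Matrix.trace_smul, smul_eq_mul, Matrix.mul_assoc, Matrix.mul_assoc, trace_diagonal_mul]
      congr 1
      refine Finset.sum_congr rfl fun i _ => ?_
      rw [Matrix.mul_assoc]
    have hcast : ((N + 1 : ℂ) / (N : ℂ)) = (((N + 1 : ℝ) / (N : ℝ) : ℝ) : ℂ) := by
      push_cast; ring
    have hfull : A * ((Ev V * U : Matrix.unitaryGroup (Fin (N + 1)) ℂ) :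
          Matrix (Fin (N + 1)) (Fin (N + 1)) ℂ) * B *
          star ((Ev V * U : Matrix.unitaryGroup (Fin (N + 1)) ℂ) :
          Matrix (Fin (N + 1)) (Fin (N + 1)) ℂ)
        = A * (embMat (V : Matrix (Fin N) (Fin N) ℂ) * M *
            (embMat (V : Matrix (Fin N) (Fin N) ℂ))ᴴ) := by
      rw [hcoemul, ← hW]
      noncomm_ring
    rw [hF]
    simp only []
    rw [hfull, htr, htr2, hcast, Complex.re_ofReal_mul, Complex.re_sum]
    simp only [Complex.re_ofReal_mul]
    rw [← Real.exp_add]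
    congr 1
    push_cast
    field_simp
  -- integrate hpt over V
  calc (∫ V, F (Ev V * U) ∂ν)
      = ∫ V, Real.exp ((N + 1 : ℝ) * a 0 * (M 0 0).re) *
        Real.exp (((N : ℝ)) * ((((N + 1 : ℂ) / (N : ℂ)) • Matrix.diagonal
            (fun i : Fin N => (a i.succ : ℂ)) *
          (V : Matrix (Fin N) (Fin N) ℂ) * (M.submatrix Fin.succ Fin.succ) *
          star (V : Matrix (Fin N) (Fin N) ℂ)).trace).re) ∂ν := by
        exact integral_congr_ae (Filter.Eventually.of_forall hpt)
    _ = Real.exp ((N + 1 : ℝ) * a 0 * (M 0 0).re) *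
        IZ N ν (((N + 1 : ℂ) / (N : ℂ)) • Matrix.diagonal (fun i : Fin N => (a i.succ : ℂ)))
          (M.submatrix Fin.succ Fin.succ) := by
        rw [MeasureTheory.integral_const_mul]
        rfl
end

section
/- Let b₁ ≥ … ≥ b_N be real numbers satisfying b_{i+1} + c/N ≥ b_i for some constant c > 0 (i.e., consecutive gaps are at most c/N). If the empirical measures N^{-1}∑δ_{b_i,N} converge weakly to a probability measure μ, then μ is supported on an interval and its absolutely continuous part has density bounded below by 1/c almost everywhere on its support. -/
open MeasureTheory Matrix
open scoped BigOperators

section AuxForDensity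
open Filter


/-- Clamp a continuous function to `[0,1]` and bundle it as a bounded continuous function. -/
noncomputable def clamp01 (f : ℝ → ℝ) (hf : Continuous f) : BoundedContinuousFunction ℝ ℝ :=
  BoundedContinuousFunction.mkOfBound
    ⟨fun t => max 0 (min 1 (f t)), by fun_prop⟩ 1
    (by
      intro s t
      simp only [ContinuousMap.coe_mk, Real.dist_eq]
      have h1 : ∀ r : ℝ, 0 ≤ max 0 (min 1 r) := fun r => le_max_left _ _
      have h2 : ∀ r : ℝ, max 0 (min 1 r) ≤ 1 := fun r =>
        max_le zero_le_one (min_le_left _ _)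
      rw [abs_le]
      constructor <;> nlinarith [h1 (f s), h2 (f s), h1 (f t), h2 (f t)])

lemma clamp01_apply (f : ℝ → ℝ) (hf : Continuous f) (t : ℝ) :
    clamp01 f hf t = max 0 (min 1 (f t)) := rfl

lemma clamp01_nonneg (f : ℝ → ℝ) (hf : Continuous f) (t : ℝ) :
    0 ≤ clamp01 f hf t := le_max_left _ _

lemma clamp01_le_one (f : ℝ → ℝ) (hf : Continuous f) (t : ℝ) :
    clamp01 f hf t ≤ 1 := max_le zero_le_one (min_le_left _ _)

lemma clamp01_eq_one (f : ℝ → ℝ) (hf : Continuous f) {t : ℝ} (h : 1 ≤ f t) :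
    clamp01 f hf t = 1 := by
  rw [clamp01_apply, min_eq_left h, max_eq_right zero_le_one]

lemma clamp01_eq_zero (f : ℝ → ℝ) (hf : Continuous f) {t : ℝ} (h : f t ≤ 0) :
    clamp01 f hf t = 0 := by
  rw [clamp01_apply, max_eq_left]
  exact (min_le_right _ _).trans h

lemma Iio_eq_iUnion_aux (x : ℝ) : Set.Iio x = ⋃ k : ℕ, Set.Iio (x - 1/(k+1)) := by
  ext t
  simp only [Set.mem_Iio, Set.mem_iUnion]
  constructor
  · intro ht
    obtain ⟨k, hk⟩ := exists_nat_gt (1/(x - t))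
    refine ⟨k, ?_⟩
    have h0 : 0 < x - t := by linarith
    have h1 : 0 < (k:ℝ) + 1 := by positivity
    have h2 : 1/(x-t) < (k:ℝ) + 1 := by linarith
    have h3 : 1/((k:ℝ)+1) < x - t := by
      rw [div_lt_iff₀ h1]
      calc 1 = (x - t) * (1/(x-t)) := by field_simp
        _ < (x-t) * ((k:ℝ)+1) := by exact mul_lt_mul_of_pos_left h2 h0
    linarith
  · rintro ⟨k, hk⟩
    have : (0:ℝ) < 1/((k:ℝ)+1) := by positivity
    linarith

lemma Ioi_eq_iUnion_aux (x : ℝ) : Set.Ioi x = ⋃ k : ℕ, Set.Ioi (x + 1/(k+1)) := by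
  ext t
  simp only [Set.mem_Ioi, Set.mem_iUnion]
  constructor
  · intro ht
    obtain ⟨k, hk⟩ := exists_nat_gt (1/(t - x))
    refine ⟨k, ?_⟩
    have h0 : 0 < t - x := by linarith
    have h1 : 0 < (k:ℝ) + 1 := by positivity
    have h2 : 1/(t-x) < (k:ℝ) + 1 := by linarith
    have h3 : 1/((k:ℝ)+1) < t - x := by
      rw [div_lt_iff₀ h1]
      calc 1 = (t - x) * (1/(t-x)) := by field_simp
        _ < (t-x) * ((k:ℝ)+1) := by exact mul_lt_mul_of_pos_left h2 h0
    linarith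
  · rintro ⟨k, hk⟩
    have : (0:ℝ) < 1/((k:ℝ)+1) := by positivity
    linarith


lemma gap_sum (c : ℝ) (n : ℕ) (b : Fin n → ℝ)
    (hgap : ∀ i j : Fin n, j.val = i.val + 1 → b i - b j ≤ c / n) (i : Fin n) :
    ∀ d : ℕ, ∀ j : Fin n, j.val = i.val + d → b i - b j ≤ d * (c / n) := by
  intro d
  induction d with
  | zero =>
    intro j hj
    have : j = i := Fin.ext (by omega)
    simp [this]
  | succ d ih =>
    intro j hj
    have hlt : i.val + d < n := by omega
    have h1 := ih ⟨i.val + d, hlt⟩ rfl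
    have h2 := hgap ⟨i.val + d, hlt⟩ j (by simp only [hj]; omega)
    push_cast
    linarith

lemma count_in_interval (c : ℝ) (hc : 0 < c) (n : ℕ) (b : Fin n → ℝ)
    (hmono : Antitone b)
    (hgap : ∀ i j : Fin n, j.val = i.val + 1 → b i - b j ≤ c / n)
    (x y : ℝ) (hxy : x < y)
    (hlow : ∃ i, b i < x) (hhigh : ∃ i, y < b i) :
    (y - x) * n / c - 1 ≤ ((Finset.univ.filter (fun i => b i ∈ Set.Icc x y)).card : ℝ) := by
  classical
  obtain ⟨i0, hi0⟩ := hlow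
  obtain ⟨i1, hi1⟩ := hhigh
  have hn : 0 < n := i0.pos
  set K : Finset (Fin n) := Finset.univ.filter (fun i => y < b i) with hK
  set L : Finset (Fin n) := Finset.univ.filter (fun i => b i < x) with hL
  have hKne : K.Nonempty := ⟨i1, by simp [hK, hi1]⟩
  have hLne : L.Nonempty := ⟨i0, by simp [hL, hi0]⟩
  set j := K.max' hKne with hj
  set k := L.min' hLne with hk
  have hbj : y < b j := by have := K.max'_mem hKne; simpa [hK] using this
  have hbk : b k < x := by have := L.min'_mem hLne; simpa [hL] using this
  have hjk : j < k := by
    by_contra h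
    push_neg at h
    have := hmono h
    linarith
  -- middle indices lie in [x, y]
  have hmid : Finset.Ioo j k ⊆ Finset.univ.filter (fun i => b i ∈ Set.Icc x y) := by
    intro i hi
    rw [Finset.mem_Ioo] at hi
    simp only [Finset.mem_filter, Finset.mem_univ, true_and, Set.mem_Icc]
    constructor
    · by_contra h
      push_neg at h
      have : i ∈ L := by simp [hL, h]
      have := L.min'_le i this
      exact absurd (lt_of_lt_of_le hi.2 this) (lt_irrefl i)
    · by_contra h
      push_neg at h
      have : i ∈ K := by simp [hK, h]
      have := K.le_max' i this
      exact absurd (lt_of_le_of_lt this hi.1) (lt_irrefl i)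
  have hcard : (Finset.Ioo j k).card = k.val - j.val - 1 := by
    rw [show (Finset.Ioo j k).card = ((Finset.Ioo j k).map Fin.valEmbedding).card from (Finset.card_map _).symm, Fin.map_valEmbedding_Ioo, Nat.card_Ioo]
  have hjklt : j.val < k.val := hjk
  -- gap bound between j and k
  have hgs := gap_sum c n b hgap j (k.val - j.val) k (by omega)
  have hyx : y - x ≤ ((k.val - j.val : ℕ) : ℝ) * (c / n) := by
    have : y - x < b j - b k := by linarith
    linarith
  have hcast : ((k.val - j.val : ℕ) : ℝ) = (k.val : ℝ) - j.val := by
    push_cast [Nat.cast_sub hjklt.le]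
    ring
  have hn' : (0:ℝ) < n := by exact_mod_cast hn
  have hmain : (y - x) * n / c ≤ (k.val : ℝ) - j.val := by
    rw [div_le_iff₀ hc]
    rw [hcast] at hyx
    calc (y - x) * n ≤ (((k.val : ℝ) - j.val) * (c / n)) * n := by nlinarith
      _ = ((k.val : ℝ) - j.val) * c := by field_simp
  have hcard' : ((k.val : ℝ) - j.val) - 1 ≤ ((Finset.univ.filter (fun i => b i ∈ Set.Icc x y)).card : ℝ) := by
    have h1 := Finset.card_le_card hmid
    have h2 : ((Finset.Ioo j k).card : ℝ) = (k.val : ℝ) - j.val - 1 := by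
      rw [hcard]
      have : 1 ≤ k.val - j.val := by omega
      push_cast [Nat.cast_sub hjklt.le, Nat.cast_sub this]
      ring
    calc ((k.val : ℝ) - j.val) - 1 = ((Finset.Ioo j k).card : ℝ) := h2.symm
      _ ≤ _ := by exact_mod_cast h1
  linarith

end AuxForDensity

/-- If the decreasing reals `b_{1,N} ≥ … ≥ b_{N,N}` have consecutive gaps at most `c/N`
and their empirical measures converge weakly to a probability measure `μ`, then `μ` is
supported on an interval on which its density (w.r.t. Lebesgue) is at least `1/c` a.e.,
expressed as `(1/c)·vol(s) ≤ μ(s)` for measurable `s` inside the interval. -/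
theorem limit_density_lower_bound (c : ℝ) (hc : 0 < c)
    (b : ∀ N : ℕ, Fin N → ℝ)
    (hmono : ∀ N, Antitone (b N))
    (hgap : ∀ N, ∀ i j : Fin N, j.val = i.val + 1 → b N i - b N j ≤ c / N)
    (μ : Measure ℝ) (hμ : IsProbabilityMeasure μ)
    (hconv : ∀ f : BoundedContinuousFunction ℝ ℝ,
      Filter.Tendsto (fun N : ℕ => (N : ℝ)⁻¹ * ∑ i : Fin N, f (b N i))
        Filter.atTop (nhds (∫ x, f x ∂μ))) :
    ∃ l u : ℝ, l ≤ u ∧ μ (Set.Icc l u) = 1 ∧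
      ∀ s : Set ℝ, MeasurableSet s → s ⊆ Set.Icc l u →
        ENNReal.ofReal (1 / c) * MeasureTheory.volume s ≤ μ s := by
  classical
  -- Step E: eventually there are points below x (resp. above y)
  have evLow : ∀ x : ℝ, μ (Set.Iio x) ≠ 0 →
      ∀ᶠ n in Filter.atTop, ∃ i : Fin n, b n i < x := by
    intro x hx
    obtain ⟨x', hx'lt, hx'⟩ : ∃ x' : ℝ, x' < x ∧ μ (Set.Iio x') ≠ 0 := by
      by_contra h
      push_neg at h
      apply hx
      rw [Iio_eq_iUnion_aux]
      refine measure_iUnion_null fun k => h _ ?_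
      have : (0:ℝ) < 1/((k:ℝ)+1) := by positivity
      linarith
    have hden : 0 < x - x' := by linarith
    set g := clamp01 (fun t => (x - t)/(x - x')) (by fun_prop) with hg
    have hgeind : ∀ t : ℝ, Set.indicator (Set.Iio x') (fun _ => (1:ℝ)) t ≤ g t := by
      intro t
      by_cases ht : t ∈ Set.Iio x'
      · rw [Set.indicator_of_mem ht]
        refine le_of_eq (clamp01_eq_one _ _ ?_).symm
        rw [le_div_iff₀ hden]
        simp only [Set.mem_Iio] at ht
        linarith
      · rw [Set.indicator_of_notMem ht]
        exact clamp01_nonneg _ _ _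
    have hintpos : 0 < ∫ t, g t ∂μ := by
      have h1 : ∫ t, Set.indicator (Set.Iio x') (fun _ => (1:ℝ)) t ∂μ ≤ ∫ t, g t ∂μ := by
        refine integral_mono ((integrable_const (1:ℝ)).indicator measurableSet_Iio)
          (g.integrable μ) hgeind
      rw [integral_indicator_const (1:ℝ) measurableSet_Iio] at h1
      have h2 : 0 < (μ (Set.Iio x')).toReal :=
        ENNReal.toReal_pos hx' (measure_ne_top μ _)
      simp only [smul_eq_mul, mul_one] at h1
      rw [measureReal_def] at h1
      linarith
    filter_upwards [(hconv g).eventually (eventually_gt_nhds hintpos)] with n hn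
    by_contra hno
    push_neg at hno
    have : ∀ i : Fin n, g (b n i) = 0 := by
      intro i
      refine clamp01_eq_zero _ _ ?_
      have := hno i
      have : x - b n i ≤ 0 := by linarith
      exact div_nonpos_of_nonpos_of_nonneg this hden.le
    simp only [this, Finset.sum_const_zero, mul_zero, lt_irrefl] at hn
  have evHigh : ∀ y : ℝ, μ (Set.Ioi y) ≠ 0 →
      ∀ᶠ n in Filter.atTop, ∃ i : Fin n, y < b n i := by
    intro y hy
    obtain ⟨y', hy'lt, hy'⟩ : ∃ y' : ℝ, y < y' ∧ μ (Set.Ioi y') ≠ 0 := by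
      by_contra h
      push_neg at h
      apply hy
      rw [Ioi_eq_iUnion_aux]
      refine measure_iUnion_null fun k => h _ ?_
      have : (0:ℝ) < 1/((k:ℝ)+1) := by positivity
      linarith
    have hden : 0 < y' - y := by linarith
    set g := clamp01 (fun t => (t - y)/(y' - y)) (by fun_prop) with hg
    have hgeind : ∀ t : ℝ, Set.indicator (Set.Ioi y') (fun _ => (1:ℝ)) t ≤ g t := by
      intro t
      by_cases ht : t ∈ Set.Ioi y'
      · rw [Set.indicator_of_mem ht]
        refine le_of_eq (clamp01_eq_one _ _ ?_).symm
        rw [le_div_iff₀ hden]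
        simp only [Set.mem_Ioi] at ht
        linarith
      · rw [Set.indicator_of_notMem ht]
        exact clamp01_nonneg _ _ _
    have hintpos : 0 < ∫ t, g t ∂μ := by
      have h1 : ∫ t, Set.indicator (Set.Ioi y') (fun _ => (1:ℝ)) t ∂μ ≤ ∫ t, g t ∂μ := by
        refine integral_mono ((integrable_const (1:ℝ)).indicator measurableSet_Ioi)
          (g.integrable μ) hgeind
      rw [integral_indicator_const (1:ℝ) measurableSet_Ioi] at h1
      have h2 : 0 < (μ (Set.Ioi y')).toReal :=
        ENNReal.toReal_pos hy' (measure_ne_top μ _)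
      simp only [smul_eq_mul, mul_one] at h1
      rw [measureReal_def] at h1
      linarith
    filter_upwards [(hconv g).eventually (eventually_gt_nhds hintpos)] with n hn
    by_contra hno
    push_neg at hno
    have : ∀ i : Fin n, g (b n i) = 0 := by
      intro i
      refine clamp01_eq_zero _ _ ?_
      have := hno i
      have : b n i - y ≤ 0 := by linarith
      exact div_nonpos_of_nonpos_of_nonneg this hden.le
    simp only [this, Finset.sum_const_zero, mul_zero, lt_irrefl] at hn
  -- Step K: key measure lower bound on open intervals
  have key : ∀ x y : ℝ, x < y → μ (Set.Iio x) ≠ 0 → μ (Set.Ioi y) ≠ 0 →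
      ENNReal.ofReal ((y - x)/c) ≤ μ (Set.Ioo x y) := by
    intro x y hxy hlo hhi
    have main : ∀ ε : ℝ, 0 < ε → 2*ε < y - x →
        (y - x - 2*ε)/c ≤ (μ (Set.Ioo x y)).toReal := by
      intro ε hε hε2
      set f := clamp01 (fun t => min ((t - x)/ε) ((y - t)/ε)) (by fun_prop) with hf
      -- upper bound
      have hfle : ∀ t : ℝ, f t ≤ Set.indicator (Set.Ioo x y) (fun _ => (1:ℝ)) t := by
        intro t
        by_cases ht : t ∈ Set.Ioo x y
        · rw [Set.indicator_of_mem ht]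
          exact clamp01_le_one _ _ _
        · rw [Set.indicator_of_notMem ht]
          refine le_of_eq (clamp01_eq_zero _ _ ?_)
          simp only [Set.mem_Ioo, not_and_or, not_lt] at ht
          rcases ht with ht | ht
          · exact (min_le_left _ _).trans (div_nonpos_of_nonpos_of_nonneg (by linarith) hε.le)
          · exact (min_le_right _ _).trans (div_nonpos_of_nonpos_of_nonneg (by linarith) hε.le)
      have hfub : ∫ t, f t ∂μ ≤ (μ (Set.Ioo x y)).toReal := by
        have h1 := integral_mono (f.integrable μ)
          ((integrable_const (1:ℝ)).indicator measurableSet_Ioo) hfle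
        rwa [integral_indicator_const (1:ℝ) measurableSet_Ioo, smul_eq_mul, mul_one] at h1
      -- lower bound eventually
      have hev : ∀ᶠ n : ℕ in Filter.atTop,
          (y - x - 2*ε)/c - 1/(n:ℝ) ≤ (n:ℝ)⁻¹ * ∑ i : Fin n, f (b n i) := by
        filter_upwards [evLow x hlo, evHigh y hhi, Filter.eventually_ge_atTop 1]
          with n hl hh hn1
        have hn0 : (0:ℝ) < n := by exact_mod_cast hn1
        obtain ⟨i0, hi0⟩ := hl
        obtain ⟨i1, hi1⟩ := hh
        have hcount := count_in_interval c hc n (b n) (hmono n) (hgap n)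
          (x + ε) (y - ε) (by linarith) ⟨i0, by linarith⟩ ⟨i1, by linarith⟩
        set A := Finset.univ.filter (fun i => b n i ∈ Set.Icc (x + ε) (y - ε)) with hA
        have hsumA : (A.card : ℝ) = ∑ i ∈ A, f (b n i) := by
          rw [Finset.sum_congr rfl (fun i hi => ?_), Finset.sum_const, nsmul_eq_mul, mul_one]
          rw [hA, Finset.mem_filter] at hi
          obtain ⟨hi1', hi2'⟩ := Set.mem_Icc.mp hi.2
          rw [hf]
          refine clamp01_eq_one _ _ (le_min ?_ ?_)
          · rw [le_div_iff₀ hε]; linarith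
          · rw [le_div_iff₀ hε]; linarith
        have hsum : (A.card : ℝ) ≤ ∑ i : Fin n, f (b n i) := by
          rw [hsumA]
          exact Finset.sum_le_sum_of_subset_of_nonneg (Finset.subset_univ A)
            (fun i _ _ => clamp01_nonneg _ _ _)
        have hc1 : (y - ε - (x + ε)) * n / c - 1 ≤ (A.card : ℝ) := hcount
        have : (y - x - 2*ε) * n / c - 1 ≤ ∑ i : Fin n, f (b n i) := by
          have : y - ε - (x + ε) = y - x - 2*ε := by ring
          rw [this] at hc1
          linarith
        have step1 : (n:ℝ)⁻¹ * ((y - x - 2*ε) * n / c - 1)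
            ≤ (n:ℝ)⁻¹ * ∑ i : Fin n, f (b n i) :=
          mul_le_mul_of_nonneg_left this (by positivity)
        have hne : (n:ℝ) ≠ 0 := hn0.ne'
        have step2 : (n:ℝ)⁻¹ * ((y - x - 2*ε) * n / c - 1) = (y - x - 2*ε)/c - 1/n := by
          field_simp
        linarith
      have hlim : Filter.Tendsto (fun n : ℕ => (y - x - 2*ε)/c - 1/(n:ℝ))
          Filter.atTop (nhds ((y - x - 2*ε)/c)) := by
        have := tendsto_one_div_atTop_nhds_zero_nat (𝕜 := ℝ)
        simpa using (tendsto_const_nhds (x := (y - x - 2*ε)/c)).sub this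
      have hge := le_of_tendsto_of_tendsto hlim (hconv f) hev
      linarith
    have hreal : (y - x)/c ≤ (μ (Set.Ioo x y)).toReal := by
      by_contra h
      push_neg at h
      set M := (μ (Set.Ioo x y)).toReal with hM
      have hd : 0 < (y - x)/c - M := by linarith
      set ε := min ((y - x)/4) (c * ((y - x)/c - M)/4) with hε
      have hε0 : 0 < ε := by
        apply lt_min
        · have : 0 < y - x := by linarith
          linarith
        · positivity
      have h2ε : 2*ε < y - x := by
        have := min_le_left ((y - x)/4) (c * ((y - x)/c - M)/4)
        have hyx : 0 < y - x := by linarith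
        calc 2*ε ≤ 2*((y-x)/4) := by linarith
          _ < y - x := by linarith
      have := main ε hε0 h2ε
      have h3 : 2*ε/c ≤ ((y - x)/c - M)/2 := by
        have h4 := min_le_right ((y - x)/4) (c * ((y - x)/c - M)/4)
        rw [div_le_div_iff₀ hc (by norm_num : (0:ℝ) < 2)]
        nlinarith
      have h5 : (y - x - 2*ε)/c = (y-x)/c - 2*ε/c := by ring
      rw [h5] at this
      linarith
    calc ENNReal.ofReal ((y - x)/c) ≤ ENNReal.ofReal ((μ (Set.Ioo x y)).toReal) :=
        ENNReal.ofReal_le_ofReal hreal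
      _ = μ (Set.Ioo x y) := ENNReal.ofReal_toReal (measure_ne_top μ _)
  -- existence of mass on each side
  have hSex0 : ∃ x0 : ℝ, μ (Set.Iio x0) ≠ 0 := by
    by_contra h
    push_neg at h
    have hu : (Set.univ : Set ℝ) = ⋃ k : ℕ, Set.Iio (k : ℝ) := by
      ext t
      simp only [Set.mem_univ, Set.mem_iUnion, Set.mem_Iio, true_iff]
      exact exists_nat_gt t
    have h0 : μ Set.univ = 0 := by
      rw [hu]
      exact measure_iUnion_null fun k => h _
    rw [measure_univ] at h0
    exact one_ne_zero h0
  have hTex0 : ∃ y0 : ℝ, μ (Set.Ioi y0) ≠ 0 := by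
    by_contra h
    push_neg at h
    have hu : (Set.univ : Set ℝ) = ⋃ k : ℕ, Set.Ioi (-(k : ℝ)) := by
      ext t
      simp only [Set.mem_univ, Set.mem_iUnion, Set.mem_Ioi, true_iff]
      obtain ⟨k, hk⟩ := exists_nat_gt (-t)
      exact ⟨k, by linarith⟩
    have h0 : μ Set.univ = 0 := by
      rw [hu]
      exact measure_iUnion_null fun k => h _
    rw [measure_univ] at h0
    exact one_ne_zero h0
  -- S and T nonempty
  have hofReal3 : ¬ (ENNReal.ofReal 3 ≤ 1) := by
    rw [ENNReal.ofReal_le_one]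
    norm_num
  have hSex : ∃ z : ℝ, μ (Set.Iio z) = 0 := by
    by_contra h
    push_neg at h
    obtain ⟨y0, hy0⟩ := hTex0
    have h1 := key (y0 - 3*c) y0 (by linarith) (h _) hy0
    rw [show y0 - (y0 - 3*c) = 3*c by ring, mul_div_assoc, div_self hc.ne', mul_one] at h1
    exact hofReal3 (h1.trans prob_le_one)
  have hTex : ∃ z : ℝ, μ (Set.Ioi z) = 0 := by
    by_contra h
    push_neg at h
    obtain ⟨x0, hx0⟩ := hSex0
    have h1 := key x0 (x0 + 3*c) (by linarith) hx0 (h _)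
    rw [show x0 + 3*c - x0 = 3*c by ring, mul_div_assoc, div_self hc.ne', mul_one] at h1
    exact hofReal3 (h1.trans prob_le_one)
  set S : Set ℝ := {z : ℝ | μ (Set.Iio z) = 0} with hS
  set T : Set ℝ := {z : ℝ | μ (Set.Ioi z) = 0} with hT
  have hST : ∀ s ∈ S, ∀ t ∈ T, s ≤ t := by
    intro s hs t ht
    by_contra hlt
    push_neg at hlt
    have hcover : (Set.univ : Set ℝ) ⊆ Set.Iio s ∪ Set.Ioi t := by
      intro z _
      by_cases hz : z < s
      · exact Or.inl hz
      · push_neg at hz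
        exact Or.inr (lt_of_lt_of_le hlt hz)
    have h1 : μ Set.univ ≤ μ (Set.Iio s) + μ (Set.Ioi t) :=
      (measure_mono hcover).trans (measure_union_le _ _)
    have hs' : μ (Set.Iio s) = 0 := hs
    have ht' : μ (Set.Ioi t) = 0 := ht
    rw [hs', ht', add_zero, measure_univ] at h1
    exact one_ne_zero (le_antisymm h1 zero_le)
  have hSne : S.Nonempty := hSex
  have hTne : T.Nonempty := hTex
  obtain ⟨t0, ht0⟩ := hTne
  obtain ⟨s0, hs0⟩ := hSne
  have hSbdd : BddAbove S := ⟨t0, fun s hs => hST s hs t0 ht0⟩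
  have hTbdd : BddBelow T := ⟨s0, fun t ht => hST s0 hs0 t ht⟩
  set l := sSup S with hl
  set u := sInf T with hu
  have hlu : l ≤ u := by
    refine csSup_le ⟨s0, hs0⟩ fun s hs => le_csInf ⟨t0, ht0⟩ fun t ht => hST s hs t ht
  have hIiol : μ (Set.Iio l) = 0 := by
    rw [Iio_eq_iUnion_aux]
    refine measure_iUnion_null fun k => ?_
    have hlt : l - 1/((k:ℝ)+1) < l := by
      have : (0:ℝ) < 1/((k:ℝ)+1) := by positivity
      linarith
    obtain ⟨s, hsS, hs⟩ := exists_lt_of_lt_csSup ⟨s0, hs0⟩ hlt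
    exact measure_mono_null (Set.Iio_subset_Iio hs.le) hsS
  have hIoiu : μ (Set.Ioi u) = 0 := by
    rw [Ioi_eq_iUnion_aux]
    refine measure_iUnion_null fun k => ?_
    have hlt : u < u + 1/((k:ℝ)+1) := by
      have : (0:ℝ) < 1/((k:ℝ)+1) := by positivity
      linarith
    obtain ⟨t, htT, ht⟩ := exists_lt_of_csInf_lt ⟨t0, ht0⟩ hlt
    exact measure_mono_null (Set.Ioi_subset_Ioi ht.le) htT
  have hIcc1 : μ (Set.Icc l u) = 1 := by
    have hcompl : μ (Set.Icc l u)ᶜ = 0 := by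
      refine measure_mono_null ?_ (measure_union_null hIiol hIoiu)
      intro z hz
      simp only [Set.mem_compl_iff, Set.mem_Icc, not_and_or, not_le] at hz
      rcases hz with hz | hz
      · exact Or.inl hz
      · exact Or.inr hz
    have h2 : μ (Set.Icc l u) + μ (Set.Icc l u)ᶜ = μ Set.univ :=
      measure_add_measure_compl measurableSet_Icc
    rw [hcompl, add_zero, measure_univ] at h2
    exact h2
  -- positivity of half-line measures strictly inside (l, u)
  have hIio : ∀ z : ℝ, l < z → μ (Set.Iio z) ≠ 0 := by
    intro z hz h0
    exact absurd (le_csSup hSbdd h0) (not_le.mpr hz)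
  have hIoi : ∀ z : ℝ, z < u → μ (Set.Ioi z) ≠ 0 := by
    intro z hz h0
    exact absurd (csInf_le hTbdd h0) (not_le.mpr hz)
  -- Radon–Nikodym derivative lower bound via Besicovitch differentiation
  have hbesi := Besicovitch.ae_tendsto_rnDeriv μ volume
  have hae : ∀ᵐ z ∂volume,
      Set.indicator (Set.Ioo l u) (fun _ => ENNReal.ofReal (1/c)) z ≤ μ.rnDeriv volume z := by
    filter_upwards [hbesi] with z hz
    by_cases hmem : z ∈ Set.Ioo l u
    · rw [Set.indicator_of_mem hmem]
      refine ge_of_tendsto hz ?_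
      have hmin : (0:ℝ) < min (z - l) (u - z) := by
        refine lt_min (by linarith [hmem.1]) (by linarith [hmem.2])
      filter_upwards [Ioo_mem_nhdsGT hmin] with r hr
      obtain ⟨hr0, hrm⟩ : 0 < r ∧ r < min (z - l) (u - z) := ⟨hr.1, hr.2⟩
      have hrl : l < z - r := by
        have := lt_of_lt_of_le hrm (min_le_left _ _)
        linarith
      have hru : z + r < u := by
        have := lt_of_lt_of_le hrm (min_le_right _ _)
        linarith
      have hkey := key (z - r) (z + r) (by linarith) (hIio _ hrl) (hIoi _ hru)
      rw [show z + r - (z - r) = 2*r by ring] at hkey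
      have hball : μ (Metric.closedBall z r) ≥ ENNReal.ofReal (2*r/c) := by
        rw [Real.closedBall_eq_Icc]
        exact hkey.trans (measure_mono Set.Ioo_subset_Icc_self)
      rw [Real.volume_closedBall]
      rw [ENNReal.le_div_iff_mul_le
        (Or.inl (by simp [ENNReal.ofReal_eq_zero]; linarith))
        (Or.inl ENNReal.ofReal_ne_top)]
      calc ENNReal.ofReal (1/c) * ENNReal.ofReal (2*r)
          = ENNReal.ofReal (2*r/c) := by
            rw [← ENNReal.ofReal_mul (by positivity)]
            congr 1
            ring
        _ ≤ μ (Metric.closedBall z r) := hball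
    · rw [Set.indicator_of_notMem hmem]
      exact zero_le
  refine ⟨l, u, hlu, hIcc1, ?_⟩
  intro s hs hsub
  have hdiff : volume (s \ Set.Ioo l u) = 0 := by
    refine measure_mono_null (fun z hz => ?_) (measure_union_null
      (measure_singleton l) (measure_singleton u) : volume ({l} ∪ {u}) = 0)
    obtain ⟨hzs, hzn⟩ := hz
    have hzIcc := hsub hzs
    simp only [Set.mem_Ioo, not_and_or, not_lt] at hzn
    simp only [Set.mem_union, Set.mem_singleton_iff]
    rcases hzn with hzn | hzn
    · exact Or.inl (le_antisymm hzn hzIcc.1)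
    · exact Or.inr (le_antisymm hzIcc.2 hzn)
  have hvs : volume (Set.Ioo l u ∩ s) = volume s := by
    refine le_antisymm (measure_mono Set.inter_subset_right) ?_
    calc volume s ≤ volume (s ∩ Set.Ioo l u) + volume (s \ Set.Ioo l u) :=
          measure_le_inter_add_diff _ _ _
      _ = volume (Set.Ioo l u ∩ s) := by rw [hdiff, add_zero, Set.inter_comm]
  calc ENNReal.ofReal (1/c) * volume s
      = ∫⁻ z in s, Set.indicator (Set.Ioo l u) (fun _ => ENNReal.ofReal (1/c)) z ∂volume := by
        rw [lintegral_indicator measurableSet_Ioo, setLIntegral_const,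
          Measure.restrict_apply measurableSet_Ioo, hvs]
    _ ≤ ∫⁻ z in s, μ.rnDeriv volume z ∂volume := by
        refine lintegral_mono_ae (ae_restrict_of_ae hae)
    _ = (volume.withDensity (μ.rnDeriv volume)) s := (withDensity_apply _ hs).symm
    _ ≤ μ s := MeasureTheory.Measure.le_iff'.mp (Measure.withDensity_rnDeriv_le μ volume) s
end

section
/- Let μ be a compactly supported probability measure on ℝ. The Hilbert transform H_μ(z) = ∫ 1/(z−λ) dμ(λ) is injective on the set {z ∈ ℂ : |z| > R} for R sufficiently large, so that it admits a compositional inverse near 0; writing this inverse as K_μ(w) = 1/w + R_μ(w), the function R_μ (the R-transform) is analytic in a neighborhood of 0. -/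
open MeasureTheory Matrix
open scoped BigOperators

open Filter
open scoped Topology
section
set_option linter.unusedSectionVars false
namespace RTransformAux

variable {μ : Measure ℝ} [IsProbabilityMeasure μ]

/-- The key norm bound. -/
lemma norm_one_sub_mul {Λ' : ℝ} (hΛ' : 0 < Λ') {u : ℂ} (hu : ‖u‖ < (2 * Λ')⁻¹)
    {lam : ℝ} (hlam : |lam| ≤ Λ') : (1 : ℝ) / 2 ≤ ‖1 - u * (lam : ℂ)‖ := by
  have h1 : ‖u * (lam : ℂ)‖ ≤ 1 / 2 := by
    rw [norm_mul, Complex.norm_real, Real.norm_eq_abs]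
    calc ‖u‖ * |lam| ≤ (2 * Λ')⁻¹ * Λ' :=
          mul_le_mul hu.le hlam (abs_nonneg _) (by positivity)
      _ = 1 / 2 := by field_simp
  calc (1 : ℝ) / 2 = ‖(1 : ℂ)‖ - 1 / 2 := by simp; norm_num
    _ ≤ ‖(1 : ℂ)‖ - ‖u * (lam : ℂ)‖ := by linarith
    _ ≤ ‖1 - u * (lam : ℂ)‖ := norm_sub_norm_le _ _

lemma ne_one_sub_mul {Λ' : ℝ} (hΛ' : 0 < Λ') {u : ℂ} (hu : ‖u‖ < (2 * Λ')⁻¹)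
    {lam : ℝ} (hlam : |lam| ≤ Λ') : 1 - u * (lam : ℂ) ≠ 0 := by
  intro h
  have := norm_one_sub_mul hΛ' hu hlam
  rw [h, norm_zero] at this
  linarith

lemma norm_inv_le {Λ' : ℝ} (hΛ' : 0 < Λ') {u : ℂ} (hu : ‖u‖ < (2 * Λ')⁻¹)
    {lam : ℝ} (hlam : |lam| ≤ Λ') : ‖(1 - u * (lam : ℂ))⁻¹‖ ≤ 2 := by
  rw [norm_inv]
  have h := norm_one_sub_mul hΛ' hu hlam
  rw [inv_le_comm₀ (by linarith) (by norm_num)]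
  linarith

lemma meas_aux (u : ℂ) : AEStronglyMeasurable (fun lam : ℝ => u * (1 - u * (lam : ℂ))⁻¹) μ :=
  (((measurable_const.sub (Complex.measurable_ofReal.const_mul u)).inv).const_mul u).aestronglyMeasurable

lemma meas_aux' (u : ℂ) :
    AEStronglyMeasurable (fun lam : ℝ => ((1 - u * (lam : ℂ))⁻¹) ^ 2) μ :=
  (((measurable_const.sub (Complex.measurable_ofReal.const_mul u)).inv).pow_const 2).aestronglyMeasurable

lemma hasDerivAt_integrand {u : ℂ} {lam : ℝ} (hne : 1 - u * (lam : ℂ) ≠ 0) :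
    HasDerivAt (fun v : ℂ => v * (1 - v * (lam : ℂ))⁻¹) (((1 - u * (lam : ℂ))⁻¹) ^ 2) u := by
  have h1 : HasDerivAt (fun v : ℂ => 1 - v * (lam : ℂ)) (-(lam : ℂ)) u := by
    simpa using (hasDerivAt_mul_const (lam : ℂ)).const_sub 1
  have h2 := h1.inv hne
  have h3 := (hasDerivAt_id u).mul h2
  convert h3 using 1
  · rfl
  · rfl
  · rfl
  simp only [id, Pi.inv_apply]
  field_simp
  ring

lemma deriv_g {Λ' : ℝ} (hΛ' : 0 < Λ') (hae : ∀ᵐ lam ∂μ, |lam| ≤ Λ')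
    {u₀ : ℂ} (hu₀ : u₀ ∈ Metric.ball (0 : ℂ) (2 * Λ')⁻¹) :
    HasDerivAt (fun u : ℂ => ∫ lam : ℝ, u * (1 - u * (lam : ℂ))⁻¹ ∂μ)
      (∫ lam : ℝ, ((1 - u₀ * (lam : ℂ))⁻¹) ^ 2 ∂μ) u₀ := by
  rw [Metric.mem_ball, dist_zero_right] at hu₀
  set δ : ℝ := (2 * Λ')⁻¹ with hδ
  have hε0 : 0 < (δ - ‖u₀‖) / 2 := by linarith
  have hball : ∀ u ∈ Metric.ball u₀ ((δ - ‖u₀‖) / 2), ‖u‖ < δ := by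
    intro u hu
    rw [Metric.mem_ball, dist_eq_norm] at hu
    calc ‖u‖ = ‖u - u₀ + u₀‖ := by ring_nf
      _ ≤ ‖u - u₀‖ + ‖u₀‖ := norm_add_le _ _
      _ < (δ - ‖u₀‖) / 2 + ‖u₀‖ := by linarith
      _ ≤ δ := by linarith
  refine (hasDerivAt_integral_of_dominated_loc_of_deriv_le (F' := fun u lam => ((1 - u * (lam : ℂ))⁻¹) ^ 2) (Metric.ball_mem_nhds u₀ hε0)
    (Eventually.of_forall fun u => meas_aux u) ?_ (meas_aux' u₀)
    (bound := fun _ => (4 : ℝ)) ?_ (integrable_const (μ := μ) 4) ?_).2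
  · refine (integrable_const (μ := μ) ((2 : ℝ) * δ)).mono' (meas_aux u₀) ?_
    filter_upwards [hae] with lam hlam
    rw [norm_mul]
    calc ‖u₀‖ * ‖(1 - u₀ * (lam : ℂ))⁻¹‖ ≤ δ * 2 :=
          mul_le_mul hu₀.le (norm_inv_le hΛ' hu₀ hlam) (norm_nonneg _) (by positivity)
      _ = 2 * δ := by ring
  · filter_upwards [hae] with lam hlam u hu
    have h := norm_inv_le hΛ' (hball u hu) hlam
    calc ‖((1 - u * (lam : ℂ))⁻¹) ^ 2‖ = ‖(1 - u * (lam : ℂ))⁻¹‖ ^ 2 := norm_pow _ _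
      _ ≤ 2 ^ 2 := by nlinarith [norm_nonneg ((1 - u * (lam : ℂ))⁻¹)]
      _ = 4 := by norm_num
  · filter_upwards [hae] with lam hlam u hu
    exact hasDerivAt_integrand (ne_one_sub_mul hΛ' (hball u hu) hlam)

end RTransformAux

end

/-- The Hilbert transform `H_μ(z) = ∫ (z-λ)⁻¹ dμ(λ)` of a compactly supported probability
measure on `ℝ` is injective outside a large enough disc; its compositional inverse near
`0` has the form `K_μ(w) = 1/w + R_μ(w)` with `R_μ` (the `R`-transform) analytic in a
neighbourhood of `0`. -/
theorem R_transform_exists (μ : Measure ℝ) (hμ : IsProbabilityMeasure μ)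
    (Λ : ℝ) (hsupp : μ (Set.Icc (-Λ) Λ)ᶜ = 0) :
    ∃ R : ℝ, 0 < R ∧
      Set.InjOn (fun z : ℂ => ∫ lam : ℝ, (z - (lam : ℂ))⁻¹ ∂μ) {z : ℂ | R < ‖z‖} ∧
      ∃ (Rtr : ℂ → ℂ) (ε : ℝ), 0 < ε ∧
        AnalyticOnNhd ℂ Rtr (Metric.ball (0 : ℂ) ε) ∧
        ∀ w ∈ Metric.ball (0 : ℂ) ε, w ≠ 0 →
          ∫ lam : ℝ, ((1 / w + Rtr w) - (lam : ℂ))⁻¹ ∂μ = w := by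
  haveI := hμ
  classical
  set Λ' : ℝ := max Λ 1 with hΛ'def
  have hΛ'0 : (0 : ℝ) < Λ' := lt_of_lt_of_le one_pos (le_max_right _ _)
  have hae : ∀ᵐ lam ∂μ, |lam| ≤ Λ' := by
    have h1 : ∀ᵐ lam ∂μ, lam ∈ Set.Icc (-Λ) Λ := by
      rw [ae_iff]
      exact hsupp
    filter_upwards [h1] with lam hlam
    rw [abs_le]
    exact ⟨le_trans (neg_le_neg (le_max_left Λ 1)) hlam.1,
      hlam.2.trans (le_max_left Λ 1)⟩
  set δ : ℝ := (2 * Λ')⁻¹ with hδdef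
  have hδ0 : 0 < δ := by positivity
  set g : ℂ → ℂ := fun u => ∫ lam : ℝ, u * (1 - u * (lam : ℂ))⁻¹ ∂μ with hgdef
  -- derivative of `g`
  have hderiv : ∀ u₀ ∈ Metric.ball (0 : ℂ) δ,
      HasDerivAt g (∫ lam : ℝ, ((1 - u₀ * (lam : ℂ))⁻¹) ^ 2 ∂μ) u₀ :=
    fun u₀ hu₀ => RTransformAux.deriv_g hΛ'0 hae hu₀
  have hganal : AnalyticOnNhd ℂ g (Metric.ball (0 : ℂ) δ) :=
    DifferentiableOn.analyticOnNhd
      (fun u hu => ((hderiv u hu).differentiableAt).differentiableWithinAt)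
      Metric.isOpen_ball
  have hg0 : g 0 = 0 := by simp [hgdef]
  have hgd0 : HasDerivAt g 1 0 := by
    have h := hderiv 0 (Metric.mem_ball_self hδ0)
    simpa using h
  have hdg0 : deriv g 0 = 1 := hgd0.deriv
  have hstrict : HasStrictDerivAt g 1 0 := by
    obtain ⟨p, hp⟩ := hganal 0 (Metric.mem_ball_self hδ0)
    have h := hp.hasStrictDerivAt
    rwa [h.hasDerivAt.unique hgd0] at h
  set Φ := (hstrict.hasStrictFDerivAt_equiv one_ne_zero).toOpenPartialHomeomorph g with hΦdef
  have hΦcoe : ⇑Φ = g := rfl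
  have hS0 : (0 : ℂ) ∈ Φ.source :=
    (hstrict.hasStrictFDerivAt_equiv one_ne_zero).mem_toOpenPartialHomeomorph_source
  have hΦ0 : Φ 0 = 0 := hg0
  have hT0 : (0 : ℂ) ∈ Φ.target := by
    rw [← hg0]
    exact (hstrict.hasStrictFDerivAt_equiv one_ne_zero).image_mem_toOpenPartialHomeomorph_target
  set f : ℂ → ℂ := ⇑Φ.symm with hfdef
  have hf00 : f 0 = 0 := by
    have h := Φ.left_inv hS0
    rw [hΦ0] at h
    exact h
  -- the good region around 0
  have hgderiv : AnalyticOnNhd ℂ (deriv g) (Metric.ball (0 : ℂ) δ) := hganal.deriv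
  have hmem : Φ.source ∩ (Metric.ball (0 : ℂ) δ ∩ {u : ℂ | deriv g u ≠ 0}) ∈ 𝓝 (0 : ℂ) := by
    refine Filter.inter_mem (Φ.open_source.mem_nhds hS0)
      (Filter.inter_mem (Metric.ball_mem_nhds 0 hδ0) ?_)
    have hc : ContinuousAt (deriv g) 0 :=
      (hgderiv 0 (Metric.mem_ball_self hδ0)).continuousAt
    exact hc.eventually_ne (by rw [hdg0]; exact one_ne_zero)
  obtain ⟨r, hr0, hrsub⟩ := Metric.mem_nhds_iff.1 hmem
  -- `f` is analytic near 0
  have hfc : ContinuousAt f 0 := Φ.continuousAt_symm hT0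
  have hUmem : Φ.target ∩ f ⁻¹' Metric.ball (0 : ℂ) r ∈ 𝓝 (0 : ℂ) := by
    refine Filter.inter_mem (Φ.open_target.mem_nhds hT0) ?_
    have := hfc.preimage_mem_nhds (Metric.ball_mem_nhds (f 0) hr0)
    rwa [hf00] at this
  obtain ⟨ρ, hρ0, hρsub⟩ := Metric.mem_nhds_iff.1 hUmem
  have hfdiff : ∀ y ∈ Metric.ball (0 : ℂ) ρ, HasDerivAt f (deriv g (f y))⁻¹ y := by
    intro y hy
    obtain ⟨hyT, hyb⟩ := hρsub hy
    obtain ⟨hx1, hx2, hx3⟩ := hrsub hyb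
    have hgd : HasDerivAt g (deriv g (f y)) (f y) :=
      ((hganal (f y) hx2).differentiableAt).hasDerivAt
    exact Φ.hasDerivAt_symm hyT hx3 hgd
  have hfanal : AnalyticOnNhd ℂ f (Metric.ball (0 : ℂ) ρ) :=
    DifferentiableOn.analyticOnNhd
      (fun y hy => ((hfdiff y hy).differentiableAt).differentiableWithinAt)
      Metric.isOpen_ball
  have h0ρ : (0 : ℂ) ∈ Metric.ball (0 : ℂ) ρ := Metric.mem_ball_self hρ0
  have hfd0 : deriv f 0 = 1 := by
    have h := (hfdiff 0 h0ρ).deriv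
    rw [hf00, hdg0] at h
    simpa using h
  -- factorizations via dslope
  set q : ℂ → ℂ := dslope f 0 with hqdef
  have hqa : AnalyticAt ℂ q 0 := by
    obtain ⟨p, hp⟩ := hfanal 0 h0ρ
    exact ⟨_, hp.has_fpower_series_dslope_fslope⟩
  have hq0 : q 0 = 1 := by rw [hqdef, dslope_same]; exact hfd0
  have hfq : ∀ w : ℂ, w ≠ 0 → f w = w * q w := by
    intro w hw
    rw [hqdef, dslope_of_ne f hw, slope_def_field, hf00]
    field_simp
    ring
  set t : ℂ → ℂ := dslope (fun w => 1 - q w) 0 with htdef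
  have hsa : AnalyticAt ℂ (fun w : ℂ => 1 - q w) 0 := analyticAt_const.sub hqa
  have hta : AnalyticAt ℂ t 0 := by
    obtain ⟨p, hp⟩ := hsa
    exact ⟨_, hp.has_fpower_series_dslope_fslope⟩
  have hs0 : (fun w : ℂ => 1 - q w) 0 = 0 := by simp [hq0]
  have hqt : ∀ w : ℂ, w ≠ 0 → 1 - q w = w * t w := by
    intro w hw
    have h := dslope_of_ne (fun w : ℂ => 1 - q w) hw
    rw [htdef, h, slope_def_field]
    simp only [hq0]
    field_simp
    ring
  set Rtr : ℂ → ℂ := fun w => t w / q w with hRdef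
  -- choose ε
  have hVmem : Metric.ball (0 : ℂ) ρ ∩ Φ.target ∩
      {w : ℂ | AnalyticAt ℂ t w ∧ AnalyticAt ℂ q w ∧ q w ≠ 0} ∈ 𝓝 (0 : ℂ) := by
    refine Filter.inter_mem (Filter.inter_mem (Metric.ball_mem_nhds 0 hρ0)
      (Φ.open_target.mem_nhds hT0)) ?_
    have h1 := hta.eventually_analyticAt
    have h2 := hqa.eventually_analyticAt
    have h3 : ∀ᶠ w in 𝓝 (0 : ℂ), q w ≠ 0 :=
      hqa.continuousAt.eventually_ne (by rw [hq0]; exact one_ne_zero)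
    filter_upwards [h1, h2, h3] with w hw1 hw2 hw3
    exact ⟨hw1, hw2, hw3⟩
  obtain ⟨ε, hε0, hεsub⟩ := Metric.mem_nhds_iff.1 hVmem
  -- `H z = g z⁻¹` for `z ≠ 0`
  have hHg : ∀ z : ℂ, z ≠ 0 →
      (∫ lam : ℝ, (z - (lam : ℂ))⁻¹ ∂μ) = g z⁻¹ := by
    intro z hz
    refine integral_congr_ae (Eventually.of_forall fun lam => ?_)
    show (z - (lam : ℂ))⁻¹ = z⁻¹ * (1 - z⁻¹ * (lam : ℂ))⁻¹
    rw [← mul_inv]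
    congr 1
    field_simp
  -- injectivity radius
  set R : ℝ := (min r 1)⁻¹ with hRdef'
  have hminr : 0 < min r 1 := lt_min hr0 one_pos
  have hR0 : 0 < R := by positivity
  refine ⟨R, hR0, ?_, Rtr, ε, hε0, ?_, ?_⟩
  · -- injectivity
    intro z hz w hw hzw
    simp only [Set.mem_setOf_eq] at hz hw
    have hR1 : (1 : ℝ) ≤ R := by
      rw [hRdef', le_inv_comm₀ one_pos hminr]
      simpa using min_le_right r 1
    have hz0 : z ≠ 0 := by
      intro h; rw [h] at hz; simp at hz; linarith
    have hw0 : w ≠ 0 := by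
      intro h; rw [h] at hw; simp at hw; linarith
    have hzinv : z⁻¹ ∈ Metric.ball (0 : ℂ) r := by
      rw [Metric.mem_ball, dist_zero_right, norm_inv]
      calc ‖z‖⁻¹ < R⁻¹ := by
            apply inv_strictAnti₀ hR0 hz
        _ = min r 1 := by rw [hRdef', inv_inv]
        _ ≤ r := min_le_left r 1
    have hwinv : w⁻¹ ∈ Metric.ball (0 : ℂ) r := by
      rw [Metric.mem_ball, dist_zero_right, norm_inv]
      calc ‖w‖⁻¹ < R⁻¹ := by
            apply inv_strictAnti₀ hR0 hw
        _ = min r 1 := by rw [hRdef', inv_inv]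
        _ ≤ r := min_le_left r 1
    have h1 : g z⁻¹ = g w⁻¹ := by
      rw [← hHg z hz0, ← hHg w hw0]
      exact hzw
    have h2 : z⁻¹ = w⁻¹ :=
      Φ.injOn (hrsub hzinv).1 (hrsub hwinv).1 h1
    exact inv_injective h2
  · -- analyticity of Rtr
    intro w hw
    obtain ⟨-, hw1, hw2, hw3⟩ := hεsub hw
    exact hw1.div hw2 hw3
  · -- inverse property
    intro w hw hwne
    obtain ⟨⟨hwρ, hwT⟩, hw1, hw2, hw3⟩ := hεsub hw
    have hgfw : g (f w) = w := Φ.right_inv hwT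
    have hfw0 : f w ≠ 0 := by
      intro h
      rw [h, hg0] at hgfw
      exact hwne hgfw.symm
    have hkey : 1 / w + Rtr w = (f w)⁻¹ := by
      have h1 : f w = w * q w := hfq w hwne
      have h2 : 1 - q w = w * t w := hqt w hwne
      rw [hRdef, h1]
      field_simp
      linear_combination -h2
    rw [hkey, hHg _ (inv_ne_zero hfw0), inv_inv, hgfw]
end

section
/- For t in the interval [H_min, H_max], the function f^{(2)}_μ(t) = t·R_μ(t) − ∫ log(1 + t·R_μ(t) − t·λ) dμ(λ) equals the integral ∫₀^t R_μ(s) ds. -/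
open MeasureTheory Matrix
open scoped BigOperators

open MeasureTheory Filter Set in

private lemma aux_abs_log_le {x : ℝ} (hx : 0 < x) : |Real.log x| ≤ x⁻¹ + x := by
  rcases le_or_gt 1 x with h | h
  · rw [abs_of_nonneg (Real.log_nonneg h)]
    have h1 := Real.log_le_sub_one_of_pos hx
    have h2 : 0 ≤ x⁻¹ := by positivity
    linarith
  · rw [abs_of_nonpos (Real.log_nonpos hx.le h.le)]
    have h1 := Real.log_le_sub_one_of_pos (inv_pos.mpr hx)
    rw [Real.log_inv] at h1
    linarith

private lemma aux_abs_log_between {m c K : ℝ} (hm : 0 < m) (h1 : m ≤ c) (h2 : c ≤ K)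
    (hK : 1 ≤ K) : |Real.log c| ≤ |Real.log m| + |Real.log K| := by
  rcases le_or_gt 1 c with h | h
  · rw [abs_of_nonneg (Real.log_nonneg h)]
    have h3 : Real.log c ≤ Real.log K := Real.log_le_log (by linarith) h2
    have h4 := le_abs_self (Real.log K)
    have h5 := abs_nonneg (Real.log m)
    linarith
  · rw [abs_of_nonpos (Real.log_nonpos (by linarith) h.le)]
    have h3 : Real.log m ≤ Real.log c := Real.log_le_log hm h1
    have h4 := neg_abs_le (Real.log m)
    have h5 := abs_nonneg (Real.log K)
    linarith

private lemma aux_abs_log_min (a b : ℝ) :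
    |Real.log (min a b)| ≤ |Real.log a| + |Real.log b| := by
  rcases min_choice a b with h | h <;> rw [h]
  · linarith [abs_nonneg (Real.log b)]
  · linarith [abs_nonneg (Real.log a)]

private lemma aux_abs_between {a x b : ℝ} (h1 : a ≤ x) (h2 : x ≤ b) : |x| ≤ |a| + |b| := by
  rcases abs_cases a with ⟨_, _⟩ | ⟨_, _⟩ <;> rcases abs_cases b with ⟨_, _⟩ | ⟨_, _⟩ <;>
    rcases abs_cases x with ⟨_, _⟩ | ⟨_, _⟩ <;> linarith

open MeasureTheory Filter Set in

private lemma edge_aux (μ : Measure ℝ) (hprob : IsProbabilityMeasure μ) (lmin lmax : ℝ)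
    (hae : ∀ᵐ lam ∂μ, lam ∈ Set.Icc lmin lmax)
    (Htr : ℝ → ℝ) (hHtr : ∀ z, Htr z = ∫ lam, (z - lam)⁻¹ ∂μ)
    (Hmax : ℝ) (hHmaxpos : 0 < Hmax)
    (hHmax : Filter.Tendsto Htr (nhdsWithin lmax (Set.Ioi lmax)) (nhds Hmax)) :
    μ {lmax} = 0 ∧ MeasureTheory.Integrable (fun lam => (lmax - lam)⁻¹) μ ∧
      Hmax ≤ ∫ lam, (lmax - lam)⁻¹ ∂μ := by
  haveI := hprob
  have hmeas : ∀ z : ℝ, AEStronglyMeasurable (fun lam : ℝ => (z - lam)⁻¹) μ :=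
    fun z => ((measurable_const.sub measurable_id).inv).aestronglyMeasurable
  have hnn : ∀ z : ℝ, lmax ≤ z → ∀ᵐ lam ∂μ, 0 ≤ (z - lam)⁻¹ := by
    intro z hz
    filter_upwards [hae] with lam hlam
    have h2 := hlam.2
    have : 0 ≤ z - lam := by linarith
    positivity
  have hIz : ∀ z : ℝ, lmax < z → Integrable (fun lam => (z - lam)⁻¹) μ := by
    intro z hz
    refine Integrable.mono' (integrable_const ((z - lmax)⁻¹)) (hmeas z) ?_
    filter_upwards [hae] with lam hlam
    have h1 : 0 < z - lmax := by linarith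
    have h2 : z - lmax ≤ z - lam := by have := hlam.2; linarith
    have h0 : (0:ℝ) ≤ (z - lam)⁻¹ := by
      have : (0:ℝ) < z - lam := by linarith
      positivity
    rw [Real.norm_eq_abs, abs_of_nonneg h0]
    exact inv_anti₀ h1 h2
  -- no atom at lmax
  have hatom : μ {lmax} = 0 := by
    by_contra hne
    have hc : 0 < (μ {lmax}).toReal := ENNReal.toReal_pos hne (measure_ne_top μ _)
    set c := (μ {lmax}).toReal with hcdef
    have hev1 : ∀ᶠ z in nhdsWithin lmax (Set.Ioi lmax), Htr z < Hmax + 1 :=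
      hHmax.eventually (eventually_iff_exists_mem.mpr ⟨Set.Iio (Hmax+1), Iio_mem_nhds (by linarith), fun x hx => hx⟩)
    have hev2 : Set.Ioo lmax (lmax + c / (2 * (Hmax + 1))) ∈ nhdsWithin lmax (Set.Ioi lmax) :=
      Ioo_mem_nhdsGT_of_mem ⟨le_rfl, by linarith [show (0:ℝ) < c / (2 * (Hmax + 1)) by positivity]⟩
    obtain ⟨z, hz1, hz2⟩ := (hev1.and (eventually_of_mem hev2 fun x hx => hx)).exists
    have hzgt : lmax < z := hz2.1
    have h3 : 0 < z - lmax := by linarith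
    have hsing : ∫ lam in ({lmax} : Set ℝ), (z - lam)⁻¹ ∂μ = c * (z - lmax)⁻¹ := by
      rw [Measure.restrict_singleton, integral_smul_measure, integral_dirac]
      simp [hcdef, mul_comm]
    have hle1 : ∫ lam in ({lmax} : Set ℝ), (z - lam)⁻¹ ∂μ ≤ ∫ lam, (z - lam)⁻¹ ∂μ :=
      setIntegral_le_integral (hIz z hzgt) (hnn z hzgt.le)
    rw [hsing, ← hHtr] at hle1
    have h5 : c * (z - lmax)⁻¹ < Hmax + 1 := lt_of_le_of_lt hle1 hz1
    have hinv : (z - lmax)⁻¹ * (z - lmax) = 1 := inv_mul_cancel₀ h3.ne'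
    have h6 : c * (z - lmax)⁻¹ * (z - lmax) < (Hmax + 1) * (z - lmax) :=
      mul_lt_mul_of_pos_right h5 h3
    rw [mul_assoc, hinv, mul_one] at h6
    have h4' : (z - lmax) * (2 * (Hmax + 1)) < c :=
      (lt_div_iff₀ (by positivity)).mp (by linarith [hz2.2] : z - lmax < c / (2 * (Hmax + 1)))
    nlinarith [h4', hc, hHmaxpos, h3]
  -- Fatou: lintegral of (lmax - lam)⁻¹ is bounded by Hmax
  set zseq : ℕ → ℝ := fun n => lmax + ((n : ℝ) + 1)⁻¹ with hzseq
  have hzposn : ∀ n, lmax < zseq n := by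
    intro n
    have : (0:ℝ) < ((n : ℝ) + 1)⁻¹ := by positivity
    simp only [hzseq]; linarith
  have hseq : Tendsto zseq atTop (nhdsWithin lmax (Set.Ioi lmax)) := by
    apply tendsto_nhdsWithin_of_tendsto_nhds_of_eventually_within
    · have h1 : Tendsto (fun n : ℕ => ((n : ℝ) + 1)⁻¹) atTop (nhds 0) := by
        simpa only [one_div] using (tendsto_one_div_add_atTop_nhds_zero_nat :
          Tendsto (fun n : ℕ => 1 / ((n : ℝ) + 1)) atTop (nhds 0))
      simpa using tendsto_const_nhds.add h1
    · exact Filter.Eventually.of_forall fun n => hzposn n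
  have hHseq : Tendsto (fun n => Htr (zseq n)) atTop (nhds Hmax) := hHmax.comp hseq
  have hlint : ∀ n, (∫⁻ lam, ENNReal.ofReal ((zseq n - lam)⁻¹) ∂μ)
      = ENNReal.ofReal (Htr (zseq n)) := by
    intro n
    rw [hHtr]
    exact (ofReal_integral_eq_lintegral_ofReal (hIz _ (hzposn n)) (hnn _ (hzposn n).le)).symm
  have hfmeas : ∀ n : ℕ, Measurable (fun lam : ℝ => ENNReal.ofReal ((zseq n - lam)⁻¹)) :=
    fun n => ENNReal.measurable_ofReal.comp ((measurable_const.sub measurable_id).inv)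
  have hglel : ∀ᵐ lam ∂μ, ENNReal.ofReal ((lmax - lam)⁻¹)
      ≤ Filter.liminf (fun n => ENNReal.ofReal ((zseq n - lam)⁻¹)) Filter.atTop := by
    filter_upwards [hae] with lam hlam
    rcases eq_or_lt_of_le hlam.2 with heq | hlt
    · rw [heq]; simp
    · have h1 : Tendsto (fun n => zseq n - lam) atTop (nhds (lmax - lam)) := by
        have := hseq.mono_right nhdsWithin_le_nhds
        exact this.sub tendsto_const_nhds
      have htd : Tendsto (fun n => ENNReal.ofReal ((zseq n - lam)⁻¹)) atTop
          (nhds (ENNReal.ofReal ((lmax - lam)⁻¹))) :=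
        ENNReal.tendsto_ofReal (h1.inv₀ (by linarith : lmax - lam ≠ 0))
      exact le_of_eq htd.liminf_eq.symm
  have hkey : (∫⁻ lam, ENNReal.ofReal ((lmax - lam)⁻¹) ∂μ) ≤ ENNReal.ofReal Hmax := by
    calc ∫⁻ lam, ENNReal.ofReal ((lmax - lam)⁻¹) ∂μ
        ≤ ∫⁻ lam, Filter.liminf (fun n => ENNReal.ofReal ((zseq n - lam)⁻¹)) Filter.atTop ∂μ :=
          lintegral_mono_ae hglel
      _ ≤ Filter.liminf (fun n => ∫⁻ lam, ENNReal.ofReal ((zseq n - lam)⁻¹) ∂μ) Filter.atTop :=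
          lintegral_liminf_le hfmeas
      _ = ENNReal.ofReal Hmax := by
          simp_rw [hlint]
          exact (ENNReal.tendsto_ofReal hHseq).liminf_eq
  have hint : Integrable (fun lam => (lmax - lam)⁻¹) μ := by
    refine ⟨hmeas lmax, ?_⟩
    have heqn : (∫⁻ lam, ‖(lmax - lam)⁻¹‖ₑ ∂μ)
        = ∫⁻ lam, ENNReal.ofReal ((lmax - lam)⁻¹) ∂μ := by
      apply lintegral_congr_ae
      filter_upwards [hnn lmax le_rfl] with lam h
      exact Real.enorm_eq_ofReal h
    rw [HasFiniteIntegral, heqn]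
    exact lt_of_le_of_lt hkey ENNReal.ofReal_lt_top
  refine ⟨hatom, hint, ?_⟩
  have haene : ∀ᵐ lam ∂μ, lam ≠ lmax := by
    rw [ae_iff]
    simpa using hatom
  have hmono : ∀ z, lmax < z → Htr z ≤ ∫ lam, (lmax - lam)⁻¹ ∂μ := by
    intro z hz
    rw [hHtr]
    apply integral_mono_ae (hIz z hz) hint
    filter_upwards [hae, haene] with lam hlam hne
    have h1 : 0 < lmax - lam := lt_of_le_of_ne (by linarith [hlam.2]) (by intro h; apply hne; linarith)
    have h2 : lmax - lam ≤ z - lam := by linarith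
    exact inv_anti₀ h1 h2
  exact le_of_tendsto hHmax (eventually_mem_nhdsWithin.mono fun z hz => hmono z hz)

open MeasureTheory Filter Set in
private lemma edge_aux_min (μ : Measure ℝ) (hprob : IsProbabilityMeasure μ) (lmin lmax : ℝ)
    (hae : ∀ᵐ lam ∂μ, lam ∈ Set.Icc lmin lmax)
    (Htr : ℝ → ℝ) (hHtr : ∀ z, Htr z = ∫ lam, (z - lam)⁻¹ ∂μ)
    (Hmin : ℝ) (hHminneg : Hmin < 0)
    (hHmin : Filter.Tendsto Htr (nhdsWithin lmin (Set.Iio lmin)) (nhds Hmin)) :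
    μ {lmin} = 0 ∧ MeasureTheory.Integrable (fun lam => (lam - lmin)⁻¹) μ ∧
      ∫ lam, (lmin - lam)⁻¹ ∂μ ≤ Hmin := by
  haveI := hprob
  have hmn : Measurable fun x : ℝ => -x := measurable_neg
  set ν : Measure ℝ := μ.map (fun x : ℝ => -x) with hν
  haveI hprob' : IsProbabilityMeasure ν := Measure.isProbabilityMeasure_map hmn.aemeasurable
  have hmeasf : ∀ (m : Measure ℝ) (z : ℝ), AEStronglyMeasurable (fun lam : ℝ => (z - lam)⁻¹) m :=
    fun m z => ((measurable_const.sub measurable_id).inv).aestronglyMeasurable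
  have hae' : ∀ᵐ lam ∂ν, lam ∈ Set.Icc (-lmax) (-lmin) := by
    rw [hν]
    refine (ae_map_iff hmn.aemeasurable
      (measurableSet_Icc : MeasurableSet (Set.Icc (-lmax) (-lmin)))).mpr ?_
    filter_upwards [hae] with lam hlam
    exact ⟨by simpa using neg_le_neg hlam.2, by simpa using neg_le_neg hlam.1⟩
  set Htr' : ℝ → ℝ := fun z => -Htr (-z) with hHtr'def
  have hcomp : ∀ z : ℝ, ((fun lam : ℝ => (z - lam)⁻¹) ∘ fun x : ℝ => -x)
      = fun lam : ℝ => -(-z - lam)⁻¹ := by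
    intro z
    funext x
    simp only [Function.comp_apply, ← inv_neg]
    ring_nf
  have hIM : ∀ z : ℝ, ∫ lam, (z - lam)⁻¹ ∂ν = -∫ lam, (-z - lam)⁻¹ ∂μ := by
    intro z
    rw [hν, integral_map hmn.aemeasurable (hmeasf _ z)]
    have h1 : (fun lam : ℝ => (z - -lam)⁻¹) = fun lam : ℝ => -(-z - lam)⁻¹ := hcomp z
    rw [h1, integral_neg]
  have hHtr' : ∀ z, Htr' z = ∫ lam, (z - lam)⁻¹ ∂ν := by
    intro z
    rw [hIM z, hHtr'def, ← hHtr]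
  have hmapt : Filter.Tendsto (fun z : ℝ => -z) (nhdsWithin (-lmin) (Set.Ioi (-lmin)))
      (nhdsWithin lmin (Set.Iio lmin)) := by
    have h := (continuous_neg.continuousWithinAt (s := Set.Ioi (-lmin))
        (x := -lmin)).tendsto_nhdsWithin (t := Set.Iio lmin)
      (fun x hx => by simpa using neg_lt_neg (Set.mem_Ioi.mp hx))
    simpa using h
  have hHmax' : Filter.Tendsto Htr' (nhdsWithin (-lmin) (Set.Ioi (-lmin))) (nhds (-Hmin)) := by
    have := (hHmin.comp hmapt).neg
    simpa [hHtr'def, Function.comp] using this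
  obtain ⟨h1, h2, h3⟩ := edge_aux ν hprob' (-lmax) (-lmin) hae' Htr' hHtr' (-Hmin)
    (by linarith) hHmax'
  have hpre : (fun x : ℝ => -x) ⁻¹' ({-lmin} : Set ℝ) = {lmin} := by
    ext x; simp [neg_eq_iff_eq_neg]
  refine ⟨?_, ?_, ?_⟩
  · rw [← hpre, ← Measure.map_apply hmn (measurableSet_singleton _)]
    exact h1
  · have h2' := (integrable_map_measure (hmeasf ν (-lmin)) hmn.aemeasurable).mp (hν ▸ h2)
    have heq : ((fun lam : ℝ => (-lmin - lam)⁻¹) ∘ fun x : ℝ => -x)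
        = fun lam : ℝ => -(lmin - lam)⁻¹ := by
      have := hcomp (-lmin); simpa using this
    rw [heq] at h2'
    have heq2 : (fun lam : ℝ => -(lmin - lam)⁻¹) = fun lam : ℝ => (lam - lmin)⁻¹ := by
      funext x; rw [← inv_neg, neg_sub]
    rwa [heq2] at h2'
  · have hint : ∫ lam, (-lmin - lam)⁻¹ ∂ν = -∫ lam, (lmin - lam)⁻¹ ∂μ := by
      rw [hIM (-lmin)]; norm_num
    rw [hint] at h3
    linarith

set_option maxHeartbeats 1000000 in
/-- For `t ∈ [H_min, H_max]`, the function
`f^{(2)}_μ(t) = t·R_μ(t) − ∫ log(1 + t·R_μ(t) − t·λ) dμ(λ)` equals `∫₀^t R_μ(s) ds`. -/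
theorem f_beta_two_eq_integral_R (μ : Measure ℝ) (hμ : IsProbabilityMeasure μ)
    (lmin lmax : ℝ) (hle : lmin ≤ lmax)
    (hsupp : μ (Set.Icc lmin lmax)ᶜ = 0)
    (hedge : ∀ ε : ℝ, 0 < ε → 0 < μ (Set.Ioi (lmax - ε)) ∧ 0 < μ (Set.Iio (lmin + ε)))
    (Htr : ℝ → ℝ) (hHtr : ∀ z, Htr z = ∫ lam, (z - lam)⁻¹ ∂μ)
    (Hmin Hmax : ℝ) (hHminneg : Hmin < 0) (hHmaxpos : 0 < Hmax)
    (hHmax : Filter.Tendsto Htr (nhdsWithin lmax (Set.Ioi lmax)) (nhds Hmax))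
    (hHmin : Filter.Tendsto Htr (nhdsWithin lmin (Set.Iio lmin)) (nhds Hmin))
    (R : ℝ → ℝ) (hRcont : ContinuousOn R (Set.Icc Hmin Hmax))
    (hR : ∀ t, Hmin ≤ t → t ≤ Hmax → t ≠ 0 → Htr (1 / t + R t) = t) :
    ∀ t ∈ Set.Icc Hmin Hmax,
      t * R t - (∫ lam, Real.log (1 + t * R t - t * lam) ∂μ)
        = ∫ s in (0 : ℝ)..t, R s := by
  classical
  haveI := hμ
  have haeI : ∀ᵐ lam ∂μ, lam ∈ Set.Icc lmin lmax := by
    have h : {a : ℝ | ¬ a ∈ Set.Icc lmin lmax} = (Set.Icc lmin lmax)ᶜ := rfl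
    rw [MeasureTheory.ae_iff, h]
    exact hsupp
  obtain ⟨hatomax, hintmax, hHtrlmax⟩ :=
    edge_aux μ hμ lmin lmax haeI Htr hHtr Hmax hHmaxpos hHmax
  obtain ⟨hatomin, hintmin, hHtrlmin⟩ :=
    edge_aux_min μ hμ lmin lmax haeI Htr hHtr Hmin hHminneg hHmin
  have haeIoo : ∀ᵐ lam ∂μ, lam ∈ Set.Ioo lmin lmax := by
    have hne1 : ∀ᵐ lam ∂μ, lam ≠ lmin := by rw [MeasureTheory.ae_iff]; simpa using hatomin
    have hne2 : ∀ᵐ lam ∂μ, lam ≠ lmax := by rw [MeasureTheory.ae_iff]; simpa using hatomax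
    filter_upwards [haeI, hne1, hne2] with lam h h1 h2
    exact ⟨lt_of_le_of_ne h.1 (Ne.symm h1), lt_of_le_of_ne h.2 h2⟩
  obtain ⟨M, hM0, hM⟩ : ∃ M : ℝ, 0 ≤ M ∧ ∀ s ∈ Set.Icc Hmin Hmax, |R s| ≤ M := by
    obtain ⟨C, hC⟩ := (isCompact_Icc :
      IsCompact (Set.Icc Hmin Hmax)).exists_bound_of_continuousOn hRcont
    refine ⟨max C 0, le_max_right _ _, fun s hs => ?_⟩
    have := hC s hs
    rw [Real.norm_eq_abs] at this
    exact this.trans (le_max_left _ _)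
  set L : ℝ := |lmin| + |lmax| with hL
  clear_value L
  have hL0 : 0 ≤ L := by rw [hL]; positivity
  have hlamabs : ∀ lam ∈ Set.Icc lmin lmax, |lam| ≤ L := by
    intro lam hlam
    rw [hL]
    rcases abs_cases lam with ⟨h, _⟩ | ⟨h, _⟩ <;>
      rcases abs_cases lmin with ⟨h1, _⟩ | ⟨h1, _⟩ <;>
      rcases abs_cases lmax with ⟨h2, _⟩ | ⟨h2, _⟩ <;>
      [skip; skip; skip; skip; skip; skip; skip; skip] <;>
      (try linarith [hlam.1, hlam.2])
  -- exclusion of z touching lmax / lmin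
  have hnotmax : ∀ s ∈ Set.Ioo Hmin Hmax, s ≠ 0 → 1/s + R s ≠ lmax := by
    intro s hs hs0 heq
    have h1 : Htr lmax = s := by rw [← heq]; exact hR s hs.1.le hs.2.le hs0
    have h2 : Hmax ≤ Htr lmax := by rw [hHtr]; exact hHtrlmax
    linarith [hs.2, h1 ▸ h2]
  have hnotmin : ∀ s ∈ Set.Ioo Hmin Hmax, s ≠ 0 → 1/s + R s ≠ lmin := by
    intro s hs hs0 heq
    have h1 : Htr lmin = s := by rw [← heq]; exact hR s hs.1.le hs.2.le hs0
    have h2 : Htr lmin ≤ Hmin := by rw [hHtr]; exact hHtrlmin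
    linarith [hs.1, h1 ▸ h2]
  -- the continuous clamped version of 1/s + R s
  have hRc : Continuous (fun s : ℝ => R (max Hmin (min Hmax s))) := by
    apply hRcont.comp_continuous (continuous_const.max (continuous_const.min continuous_id))
    intro x
    exact ⟨le_max_left _ _, max_le (by linarith) (min_le_left _ _)⟩
  set zc : ℝ → ℝ := fun s => 1/s + R (max Hmin (min Hmax s)) with hzc
  have hzceq : ∀ s ∈ Set.Icc Hmin Hmax, zc s = 1/s + R s := by
    intro s hs
    simp only [hzc]
    rw [min_eq_right hs.2, max_eq_right hs.1]
  have hIoosubP : Set.Ioo (0:ℝ) Hmax ⊆ Set.Icc Hmin Hmax :=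
    fun x hx => ⟨by linarith [hx.1], hx.2.le⟩
  have hIoosubN : Set.Ioo Hmin (0:ℝ) ⊆ Set.Icc Hmin Hmax :=
    fun x hx => ⟨hx.1.le, by linarith [hx.2]⟩
  have hzccont : ∀ a b : ℝ, (0:ℝ) ∉ Set.Ioo a b → ContinuousOn zc (Set.Ioo a b) := by
    intro a b h0
    apply ContinuousOn.add
    · apply ContinuousOn.div continuousOn_const continuousOn_id
      intro x hx
      intro hx0
      exact h0 (hx0 ▸ hx)
    · exact hRc.continuousOn
  -- positive side: z stays above lmax
  have hzpos : ∀ s ∈ Set.Ioo (0:ℝ) Hmax, lmax < 1/s + R s := by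
    have h0 : (0:ℝ) ∉ Set.Ioo (0:ℝ) Hmax := fun h => lt_irrefl _ h.1
    have hcont := hzccont 0 Hmax h0
    set u := Set.Ioo (0:ℝ) Hmax ∩ zc ⁻¹' (Set.Ioi lmax) with hu
    set v := Set.Ioo (0:ℝ) Hmax ∩ zc ⁻¹' (Set.Iio lmax) with hv
    have huo : IsOpen u := hcont.isOpen_inter_preimage isOpen_Ioo isOpen_Ioi
    have hvo : IsOpen v := hcont.isOpen_inter_preimage isOpen_Ioo isOpen_Iio
    have hdisj : Disjoint u v := by
      rw [Set.disjoint_left]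
      rintro x ⟨_, hx1⟩ ⟨_, hx2⟩
      simp only [Set.mem_preimage, Set.mem_Ioi, Set.mem_Iio] at hx1 hx2
      linarith
    have hcover : Set.Ioo (0:ℝ) Hmax ⊆ u ∪ v := by
      intro x hx
      have hxI : x ∈ Set.Ioo Hmin Hmax := ⟨by linarith [hx.1], hx.2⟩
      have hne := hnotmax x hxI (ne_of_gt hx.1)
      rw [← hzceq x (hIoosubP hx)] at hne
      rcases lt_or_gt_of_ne hne with h | h
      · exact Or.inr ⟨hx, h⟩
      · exact Or.inl ⟨hx, h⟩
    have hne : (Set.Ioo (0:ℝ) Hmax ∩ u).Nonempty := by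
      set s0 : ℝ := min (Hmax/2) ((2*(|lmax|+M+1))⁻¹) with hs0
      clear_value s0
      have hs0p : 0 < s0 := by rw [hs0]; exact lt_min (by linarith) (by positivity)
      have hle2 : s0 ≤ Hmax/2 := by rw [hs0]; exact min_le_left _ _
      have hs0m : s0 ∈ Set.Ioo (0:ℝ) Hmax := ⟨hs0p, by linarith⟩
      refine ⟨s0, hs0m, hs0m, ?_⟩
      have hle : s0 ≤ (2*(|lmax|+M+1))⁻¹ := by rw [hs0]; exact min_le_right _ _
      have hinv : 2*(|lmax|+M+1) ≤ 1/s0 := by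
        rw [one_div]
        have hpp : (0:ℝ) < 2*(|lmax|+M+1) := by positivity
        have h2 := inv_anti₀ hs0p hle
        rwa [inv_inv] at h2
      have hzeq := hzceq s0 (hIoosubP hs0m)
      have hRb := hM s0 (hIoosubP hs0m)
      have h3 := neg_abs_le (R s0)
      have h4 := le_abs_self lmax
      show zc s0 ∈ Set.Ioi lmax
      rw [Set.mem_Ioi, hzeq]
      linarith [abs_nonneg lmax, neg_abs_le (R s0), hRb]
    have hfin := IsPreconnected.subset_left_of_subset_union huo hvo hdisj hcover hne
      isPreconnected_Ioo
    intro s hs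
    have h2 := (hfin hs).2
    rw [Set.mem_preimage, Set.mem_Ioi, hzceq s (hIoosubP hs)] at h2
    exact h2
  -- negative side: z stays below lmin
  have hzneg : ∀ s ∈ Set.Ioo Hmin (0:ℝ), 1/s + R s < lmin := by
    have h0 : (0:ℝ) ∉ Set.Ioo Hmin (0:ℝ) := fun h => lt_irrefl _ h.2
    have hcont := hzccont Hmin 0 h0
    set u := Set.Ioo Hmin (0:ℝ) ∩ zc ⁻¹' (Set.Iio lmin) with hu
    set v := Set.Ioo Hmin (0:ℝ) ∩ zc ⁻¹' (Set.Ioi lmin) with hv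
    have huo : IsOpen u := hcont.isOpen_inter_preimage isOpen_Ioo isOpen_Iio
    have hvo : IsOpen v := hcont.isOpen_inter_preimage isOpen_Ioo isOpen_Ioi
    have hdisj : Disjoint u v := by
      rw [Set.disjoint_left]
      rintro x ⟨_, hx1⟩ ⟨_, hx2⟩
      simp only [Set.mem_preimage, Set.mem_Ioi, Set.mem_Iio] at hx1 hx2
      linarith
    have hcover : Set.Ioo Hmin (0:ℝ) ⊆ u ∪ v := by
      intro x hx
      have hxI : x ∈ Set.Ioo Hmin Hmax := ⟨hx.1, by linarith [hx.2]⟩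
      have hne := hnotmin x hxI (ne_of_lt hx.2)
      rw [← hzceq x (hIoosubN hx)] at hne
      rcases lt_or_gt_of_ne hne with h | h
      · exact Or.inl ⟨hx, h⟩
      · exact Or.inr ⟨hx, h⟩
    have hne : (Set.Ioo Hmin (0:ℝ) ∩ u).Nonempty := by
      set s0 : ℝ := max (Hmin/2) (-(2*(|lmin|+M+1))⁻¹) with hs0
      clear_value s0
      have hs0p : s0 < 0 := by
        rw [hs0]
        apply max_lt (by linarith)
        have : (0:ℝ) < (2*(|lmin|+M+1))⁻¹ := by positivity
        linarith
      have hle2 : Hmin/2 ≤ s0 := by rw [hs0]; exact le_max_left _ _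
      have hs0m : s0 ∈ Set.Ioo Hmin (0:ℝ) := ⟨by linarith, hs0p⟩
      refine ⟨s0, hs0m, hs0m, ?_⟩
      have hle : -(2*(|lmin|+M+1))⁻¹ ≤ s0 := by rw [hs0]; exact le_max_right _ _
      have hinv : 1/s0 ≤ -(2*(|lmin|+M+1)) := by
        have hc : (0:ℝ) < 2*(|lmin|+M+1) := by positivity
        rw [div_le_iff_of_neg hs0p]
        have h1 : (-(2*(|lmin|+M+1))) * s0 ≤ (-(2*(|lmin|+M+1))) * (-(2*(|lmin|+M+1))⁻¹) :=
          mul_le_mul_of_nonpos_left hle (by linarith)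
        have h2 : (-(2*(|lmin|+M+1))) * (-(2*(|lmin|+M+1))⁻¹) = 1 := by
          field_simp
        linarith
      have hzeq := hzceq s0 (hIoosubN hs0m)
      have hRb := hM s0 (hIoosubN hs0m)
      have h4 := neg_abs_le lmin
      show zc s0 ∈ Set.Iio lmin
      rw [Set.mem_Iio, hzeq]
      linarith [abs_nonneg lmin, le_abs_self (R s0), hRb]
    have hfin := IsPreconnected.subset_left_of_subset_union huo hvo hdisj hcover hne
      isPreconnected_Ioo
    intro s hs
    have h2 := (hfin hs).2
    rw [Set.mem_preimage, Set.mem_Iio, hzceq s (hIoosubN hs)] at h2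
    exact h2
  -- weak inequalities up to the endpoints
  have hz_ge : ∀ s, 0 < s → s ≤ Hmax → lmax ≤ 1/s + R s := by
    intro s hs0 hsmax
    rcases lt_or_eq_of_le hsmax with h | h
    · exact (hzpos s ⟨hs0, h⟩).le
    · subst h
      haveI : (nhdsWithin s (Set.Ioo (0:ℝ) s)).NeBot := by
        rw [nhdsWithin_Ioo_eq_nhdsLT hs0]
        infer_instance
      have hten : Filter.Tendsto (fun x => 1/x + R x) (nhdsWithin s (Set.Ioo (0:ℝ) s))
          (nhds (1/s + R s)) := by
        apply Filter.Tendsto.add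
        · exact ((continuousAt_const.div continuousAt_id
            (ne_of_gt hs0)).continuousWithinAt : ContinuousWithinAt (fun x : ℝ => 1/x) _ s)
        · exact ((hRcont s ⟨by linarith, le_rfl⟩).mono hIoosubP)
      exact ge_of_tendsto hten (eventually_mem_nhdsWithin.mono fun x hx => (hzpos x hx).le)
  have hz_le : ∀ s, Hmin ≤ s → s < 0 → 1/s + R s ≤ lmin := by
    intro s hsmin hs0
    rcases lt_or_eq_of_le hsmin with h | h
    · exact (hzneg s ⟨h, hs0⟩).le
    · rw [← h] at hs0 ⊢
      haveI : (nhdsWithin Hmin (Set.Ioo Hmin (0:ℝ))).NeBot := by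
        rw [nhdsWithin_Ioo_eq_nhdsGT hs0]
        infer_instance
      have hten : Filter.Tendsto (fun x => 1/x + R x) (nhdsWithin Hmin (Set.Ioo Hmin (0:ℝ)))
          (nhds (1/Hmin + R Hmin)) := by
        apply Filter.Tendsto.add
        · exact ((continuousAt_const.div continuousAt_id
            (ne_of_lt hs0)).continuousWithinAt : ContinuousWithinAt (fun x : ℝ => 1/x) _ Hmin)
        · exact ((hRcont Hmin ⟨le_rfl, by linarith⟩).mono hIoosubN)
      exact le_of_tendsto hten (eventually_mem_nhdsWithin.mono fun x hx => (hzneg x hx).le)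
  -- quantitative bounds on 1 + s R s - s lam
  set δ : ℝ := (2*(M+L+1))⁻¹ with hδdef
  clear_value δ
  have hδ : 0 < δ := by rw [hδdef]; positivity
  set K : ℝ := 1 + (|Hmin| + |Hmax|)*(M+L) with hKdef
  clear_value K
  have hK1 : 1 ≤ K := by
    rw [hKdef]
    nlinarith [abs_nonneg Hmin, abs_nonneg Hmax]
  have hsabs : ∀ s ∈ Set.Icc Hmin Hmax, |s| ≤ |Hmin| + |Hmax| := by
    intro s hs
    rcases abs_cases s with ⟨h, _⟩ | ⟨h, _⟩ <;>
      rcases abs_cases Hmin with ⟨h1, _⟩ | ⟨h1, _⟩ <;>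
      rcases abs_cases Hmax with ⟨h2, _⟩ | ⟨h2, _⟩ <;>
      (try linarith [hs.1, hs.2])
  have hclow : ∀ s ∈ Set.Icc Hmin Hmax, ∀ lam ∈ Set.Ioo lmin lmax,
      min (1/2) (min (δ*(lmax-lam)) (δ*(lam-lmin))) ≤ 1 + s*R s - s*lam := by
    intro s hs lam hlam
    have hRs := hM s hs
    have habs : |lam| ≤ L := hlamabs lam ⟨hlam.1.le, hlam.2.le⟩
    rcases le_or_gt |s| δ with hsd | hsd
    · have h1 : |s * (R s - lam)| ≤ δ * (M + L) := by
        rw [abs_mul]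
        apply mul_le_mul hsd _ (abs_nonneg _) hδ.le
        calc |R s - lam| ≤ |R s| + |lam| := abs_sub _ _
          _ ≤ M + L := add_le_add hRs habs
      have h2 : δ * (M + L) ≤ 1/2 := by
        rw [hδdef]
        have hpos : (0:ℝ) < 2*(M+L+1) := by positivity
        rw [inv_mul_le_iff₀ hpos]
        nlinarith
      have h3 : 1/2 ≤ 1 + s*R s - s*lam := by
        have he : 1 + s*R s - s*lam = 1 + s*(R s - lam) := by ring
        rw [he]
        have := neg_abs_le (s*(R s - lam))
        linarith
      exact (min_le_left _ _).trans h3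
    · have hsne : s ≠ 0 := by
        intro h0
        rw [h0, abs_zero] at hsd
        linarith
      have hfact : 1 + s*R s - s*lam = s*((1/s + R s) - lam) := by
        field_simp
      rcases lt_or_gt_of_ne hsne with hneg | hpos
      · have hds : δ ≤ -s := by
          rw [abs_of_neg hneg] at hsd
          linarith
        have hzle := hz_le s hs.1 hneg
        have h1 : δ*(lam-lmin) ≤ (-s)*(lam - (1/s + R s)) := by
          apply mul_le_mul hds _ (by linarith [hlam.1]) (by linarith)
          linarith
        have h2 : (-s)*(lam - (1/s + R s)) = s*((1/s + R s) - lam) := by ring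
        calc min (1/2) (min (δ*(lmax-lam)) (δ*(lam-lmin)))
            ≤ δ*(lam-lmin) := (min_le_right _ _).trans (min_le_right _ _)
          _ ≤ s*((1/s + R s) - lam) := by rw [← h2]; exact h1
          _ = 1 + s*R s - s*lam := hfact.symm
      · have hds : δ ≤ s := by
          rw [abs_of_pos hpos] at hsd
          linarith
        have hzge := hz_ge s hpos hs.2
        have h1 : δ*(lmax-lam) ≤ s*((1/s + R s) - lam) := by
          apply mul_le_mul hds _ (by linarith [hlam.2]) (by linarith)
          linarith
        calc min (1/2) (min (δ*(lmax-lam)) (δ*(lam-lmin)))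
            ≤ δ*(lmax-lam) := (min_le_right _ _).trans (min_le_left _ _)
          _ ≤ s*((1/s + R s) - lam) := h1
          _ = 1 + s*R s - s*lam := hfact.symm
  have hcup : ∀ s ∈ Set.Icc Hmin Hmax, ∀ lam ∈ Set.Ioo lmin lmax,
      1 + s*R s - s*lam ≤ K := by
    intro s hs lam hlam
    have h1 : |s * (R s - lam)| ≤ (|Hmin| + |Hmax|) * (M + L) := by
      rw [abs_mul]
      apply mul_le_mul (hsabs s hs) _ (abs_nonneg _) (by positivity)
      calc |R s - lam| ≤ |R s| + |lam| := abs_sub _ _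
        _ ≤ M + L := add_le_add (hM s hs) (hlamabs lam ⟨hlam.1.le, hlam.2.le⟩)
    have he : 1 + s*R s - s*lam = 1 + s*(R s - lam) := by ring
    rw [he, hKdef]
    have := le_abs_self (s*(R s - lam))
    linarith
  -- integrability of the logarithmic bounds
  have hlogint1 : MeasureTheory.Integrable (fun lam => |Real.log (lmax - lam)|) μ := by
    apply MeasureTheory.Integrable.mono' (hintmax.add (integrable_const (lmax - lmin)))
      ((Real.measurable_log.comp (measurable_const.sub measurable_id)).abs.aestronglyMeasurable)
    filter_upwards [haeIoo] with lam hlam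
    rw [Real.norm_eq_abs, abs_abs]
    have h0 : 0 < lmax - lam := by linarith [hlam.2]
    calc |Real.log (lmax - lam)| ≤ (lmax - lam)⁻¹ + (lmax - lam) := aux_abs_log_le h0
      _ ≤ (lmax - lam)⁻¹ + (lmax - lmin) := by linarith [hlam.1]
  have hlogint2 : MeasureTheory.Integrable (fun lam => |Real.log (lam - lmin)|) μ := by
    apply MeasureTheory.Integrable.mono' (hintmin.add (integrable_const (lmax - lmin)))
      ((Real.measurable_log.comp (measurable_id.sub measurable_const)).abs.aestronglyMeasurable)
    filter_upwards [haeIoo] with lam hlam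
    rw [Real.norm_eq_abs, abs_abs]
    have h0 : 0 < lam - lmin := by linarith [hlam.1]
    calc |Real.log (lam - lmin)| ≤ (lam - lmin)⁻¹ + (lam - lmin) := aux_abs_log_le h0
      _ ≤ (lam - lmin)⁻¹ + (lmax - lmin) := by linarith [hlam.2]
  set Φ : ℝ → ℝ := fun s => ∫ lam, Real.log (1 + s * R s - s * lam) ∂μ with hΦ
  -- continuity of F on the closed interval
  have hFcont : ContinuousOn (fun s => s * R s - Φ s) (Set.Icc Hmin Hmax) := by
    apply ContinuousOn.sub (continuousOn_id.mul hRcont)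
    apply MeasureTheory.continuousOn_of_dominated
      (bound := fun lam => |Real.log K| + Real.log 2 + 2*|Real.log δ|
        + |Real.log (lmax - lam)| + |Real.log (lam - lmin)|)
    · intro s _
      exact (Real.measurable_log.comp
        (measurable_const.sub (measurable_id.const_mul s))).aestronglyMeasurable
    · intro s hs
      filter_upwards [haeIoo] with lam hlam
      have hm0 : 0 < min (1/2 : ℝ) (min (δ*(lmax-lam)) (δ*(lam-lmin))) := by
        apply lt_min (by norm_num)
        exact lt_min (mul_pos hδ (by linarith [hlam.2])) (mul_pos hδ (by linarith [hlam.1]))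
      have h1 := hclow s hs lam hlam
      have h2 := hcup s hs lam hlam
      have h3 := aux_abs_log_between hm0 h1 h2 hK1
      have h4 := aux_abs_log_min (1/2 : ℝ) (min (δ*(lmax-lam)) (δ*(lam-lmin)))
      have h5 := aux_abs_log_min (δ*(lmax-lam)) (δ*(lam-lmin))
      have h6 : |Real.log (δ*(lmax-lam))| ≤ |Real.log δ| + |Real.log (lmax-lam)| := by
        rw [Real.log_mul hδ.ne' (ne_of_gt (show (0:ℝ) < lmax - lam by linarith [hlam.2]))]
        exact abs_add_le _ _
      have h7 : |Real.log (δ*(lam-lmin))| ≤ |Real.log δ| + |Real.log (lam-lmin)| := by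
        rw [Real.log_mul hδ.ne' (ne_of_gt (show (0:ℝ) < lam - lmin by linarith [hlam.1]))]
        exact abs_add_le _ _
      have h8 : |Real.log (1/2 : ℝ)| = Real.log 2 := by
        rw [one_div, Real.log_inv, abs_neg, abs_of_nonneg (Real.log_nonneg one_le_two)]
      rw [Real.norm_eq_abs]
      linarith
    · apply MeasureTheory.Integrable.add
      apply MeasureTheory.Integrable.add
      · exact integrable_const _
      · exact hlogint1
      · exact hlogint2
    · filter_upwards [haeIoo] with lam hlam
      intro s hs
      have hm0 : 0 < min (1/2 : ℝ) (min (δ*(lmax-lam)) (δ*(lam-lmin))) := by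
        apply lt_min (by norm_num)
        exact lt_min (mul_pos hδ (by linarith [hlam.2])) (mul_pos hδ (by linarith [hlam.1]))
      have hpos : 0 < 1 + s*R s - s*lam := lt_of_lt_of_le hm0 (hclow s hs lam hlam)
      have hc : ContinuousWithinAt (fun u => 1 + u * R u - u * lam)
          (Set.Icc Hmin Hmax) s :=
        ((continuousWithinAt_const.add (continuousWithinAt_id.mul (hRcont s hs)))).sub
          (continuousWithinAt_id.mul continuousWithinAt_const)
      exact hc.log hpos.ne'
  -- integrability of log (z - lam) for z outside the support interval
  have hintlog : ∀ z : ℝ, (z < lmin ∨ lmax < z) →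
      MeasureTheory.Integrable (fun lam => Real.log (z - lam)) μ := by
    intro z hz
    obtain ⟨d, hd, hdle⟩ : ∃ d, 0 < d ∧ ∀ lam ∈ Set.Icc lmin lmax, d ≤ |z - lam| := by
      rcases hz with h | h
      · refine ⟨lmin - z, by linarith, fun lam hlam => ?_⟩
        rw [abs_of_nonpos (by linarith [hlam.1])]
        linarith [hlam.1]
      · refine ⟨z - lmax, by linarith, fun lam hlam => ?_⟩
        rw [abs_of_nonneg (by linarith [hlam.2])]
        linarith [hlam.2]
    have hmlog : AEStronglyMeasurable (fun lam : ℝ => Real.log (z - lam)) μ :=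
      (Real.measurable_log.comp (measurable_const.sub measurable_id)).aestronglyMeasurable
    apply MeasureTheory.Integrable.mono'
      (integrable_const (|Real.log d| + |Real.log (|z| + L + 1)|)) hmlog
    filter_upwards [haeI] with lam hlam
    have h1 : d ≤ |z - lam| := hdle lam hlam
    have h2 : |z - lam| ≤ |z| + L + 1 := by
      calc |z - lam| ≤ |z| + |lam| := abs_sub _ _
        _ ≤ |z| + L + 1 := by linarith [hlamabs lam hlam]
    have h3 : abs (Real.log |z - lam|) ≤ |Real.log d| + |Real.log (|z| + L + 1)| :=
      aux_abs_log_between hd h1 h2 (by linarith [abs_nonneg z])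
    rw [Real.norm_eq_abs, ← Real.log_abs (z - lam)]
    exact h3
  -- decomposition of Φ
  have hPhiEq : ∀ s : ℝ, s ≠ 0 → ((1/s + R s) < lmin ∨ lmax < (1/s + R s)) →
      Φ s = Real.log s + ∫ lam, Real.log ((1/s + R s) - lam) ∂μ := by
    intro s hs0 hzout
    have hzne : ∀ᵐ lam ∂μ, Real.log (1 + s*R s - s*lam)
        = Real.log s + Real.log ((1/s + R s) - lam) := by
      filter_upwards [haeIoo] with lam hlam
      have hfact : 1 + s*R s - s*lam = s * ((1/s + R s) - lam) := by
        field_simp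
      have hne2 : (1/s + R s) - lam ≠ 0 := by
        rcases hzout with h | h
        · exact ne_of_lt (by linarith [hlam.1])
        · exact ne_of_gt (by linarith [hlam.2])
      rw [hfact, Real.log_mul hs0 hne2]
    show (∫ lam, Real.log (1 + s * R s - s * lam) ∂μ)
        = Real.log s + ∫ lam, Real.log ((1/s + R s) - lam) ∂μ
    rw [MeasureTheory.integral_congr_ae hzne,
      MeasureTheory.integral_add (integrable_const _) (hintlog _ hzout)]
    simp [measure_univ]
  -- the derivative of F
  have hFd : ∀ s : ℝ, (s ∈ Set.Ioo (0:ℝ) Hmax ∨ s ∈ Set.Ioo Hmin (0:ℝ)) →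
      HasDerivAt (fun u => u * R u - Φ u) (R s) s := by
    intro s hsmem
    have hs0 : s ≠ 0 := by
      rcases hsmem with h | h
      · exact ne_of_gt h.1
      · exact ne_of_lt h.2
    have hsIcc : s ∈ Set.Ioo Hmin Hmax := by
      rcases hsmem with h | h
      · exact ⟨by linarith [h.1], h.2⟩
      · exact ⟨h.1, by linarith [h.2]⟩
    set zs : ℝ := 1/s + R s with hzs
    clear_value zs
    have hzout : zs < lmin ∨ lmax < zs := by
      rw [hzs]
      rcases hsmem with h | h
      · exact Or.inr (hzpos s h)
      · exact Or.inl (hzneg s h)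
    obtain ⟨ε, hε, hsep⟩ : ∃ ε : ℝ, 0 < ε ∧ ∀ lam ∈ Set.Icc lmin lmax, 2*ε ≤ |zs - lam| := by
      rcases hzout with h | h
      · refine ⟨(lmin - zs)/2, by linarith, fun lam hlam => ?_⟩
        rw [abs_of_nonpos (by linarith [hlam.1])]
        linarith [hlam.1]
      · refine ⟨(zs - lmax)/2, by linarith, fun lam hlam => ?_⟩
        rw [abs_of_nonneg (by linarith [hlam.2])]
        linarith [hlam.2]
    have hball : ∀ᵐ lam ∂μ, ∀ x ∈ Metric.ball zs ε, ε ≤ |x - lam| ∧ x - lam ≠ 0 := by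
      filter_upwards [haeI] with lam hlam
      intro x hx
      have h1 := hsep lam hlam
      have h2 : |x - zs| < ε := by
        have := Metric.mem_ball.mp hx
        rwa [Real.dist_eq] at this
      have h3 : ε ≤ |x - lam| := by
        have h4 : |zs - lam| ≤ |zs - x| + |x - lam| := abs_sub_le _ _ _
        have h5 : |zs - x| = |x - zs| := abs_sub_comm _ _
        linarith
      refine ⟨h3, fun h0 => ?_⟩
      rw [h0, abs_zero] at h3
      linarith
    -- derivative of G := ∫ log (· - lam)
    have hGder := hasDerivAt_integral_of_dominated_loc_of_deriv_le (μ := μ) (x₀ := zs)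
      (F := fun x lam => Real.log (x - lam)) (F' := fun x lam => (x - lam)⁻¹)
      (bound := fun _ => ε⁻¹) (Metric.ball_mem_nhds zs hε)
      (Filter.Eventually.of_forall fun x =>
        (Real.measurable_log.comp (measurable_const.sub measurable_id)).aestronglyMeasurable)
      (hintlog zs hzout)
      (((measurable_const.sub measurable_id).inv).aestronglyMeasurable)
      (by
        filter_upwards [hball] with lam h
        intro x hx
        rw [Real.norm_eq_abs, abs_inv]
        exact inv_anti₀ hε (h x hx).1)
      (integrable_const _)
      (by
        filter_upwards [hball] with lam h
        intro x hx
        have h1 := Real.hasDerivAt_log (h x hx).2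
        have h2 : HasDerivAt (fun y : ℝ => y - lam) 1 x := (hasDerivAt_id x).sub_const lam
        exact (h1.comp x h2).congr_deriv (mul_one _))
    -- derivative of Htr
    have hHder := hasDerivAt_integral_of_dominated_loc_of_deriv_le (μ := μ) (x₀ := zs)
      (F := fun x lam => (x - lam)⁻¹) (F' := fun x lam => -((x - lam)^2)⁻¹)
      (bound := fun _ => (ε^2)⁻¹) (Metric.ball_mem_nhds zs hε)
      (Filter.Eventually.of_forall fun x =>
        ((measurable_const.sub measurable_id).inv).aestronglyMeasurable)
      (by
        apply MeasureTheory.Integrable.mono' (integrable_const ((2*ε)⁻¹))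
          (((measurable_const.sub measurable_id).inv).aestronglyMeasurable)
        filter_upwards [haeI] with lam hlam
        rw [Real.norm_eq_abs]; change |(zs - lam)⁻¹| ≤ (2 * ε)⁻¹; rw [abs_inv]
        exact inv_anti₀ (by linarith) (hsep lam hlam))
      ((((measurable_const.sub measurable_id).pow_const 2).inv.neg).aestronglyMeasurable)
      (by
        filter_upwards [hball] with lam h
        intro x hx
        rw [Real.norm_eq_abs, abs_neg, abs_inv]
        have h1 : ε^2 ≤ |(x - lam)^2| := by
          rw [abs_of_nonneg (sq_nonneg _), ← sq_abs (x - lam)]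
          exact pow_le_pow_left₀ hε.le (h x hx).1 2
        exact inv_anti₀ (by positivity) h1)
      (integrable_const _)
      (by
        filter_upwards [hball] with lam h
        intro x hx
        have h2 : HasDerivAt (fun y : ℝ => y - lam) 1 x := (hasDerivAt_id x).sub_const lam
        have h3 := h2.inv (h x hx).2
        exact (by simpa [neg_div, one_div] using h3 :
          HasDerivAt (fun y => y - lam)⁻¹ (-((x - lam) ^ 2)⁻¹) x))
    set D : ℝ := ∫ lam, -((zs - lam)^2)⁻¹ ∂μ with hD
    clear_value D
    have hD0 : D < 0 := by
      rw [hD, MeasureTheory.integral_neg]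
      have hintsq : MeasureTheory.Integrable (fun lam => ((zs - lam)^2)⁻¹) μ := by
        have hneg := hHder.1.neg
        have he : (-(fun lam : ℝ => -((zs - lam)^2)⁻¹)) = fun lam : ℝ => ((zs - lam)^2)⁻¹ := by
          funext x; simp
        rwa [he] at hneg
      have hlb : ∀ᵐ lam ∂μ, ((|zs| + L + 1)^2)⁻¹ ≤ ((zs - lam)^2)⁻¹ := by
        filter_upwards [haeI] with lam hlam
        have h1 : 2*ε ≤ |zs - lam| := hsep lam hlam
        have h2 : |zs - lam| ≤ |zs| + L + 1 := by
          calc |zs - lam| ≤ |zs| + |lam| := abs_sub _ _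
            _ ≤ |zs| + L + 1 := by linarith [hlamabs lam hlam]
        have h3 : (zs - lam)^2 ≤ (|zs| + L + 1)^2 := by
          rw [← sq_abs]
          exact pow_le_pow_left₀ (abs_nonneg _) h2 2
        have h4 : 0 < (zs - lam)^2 := by
          have : zs - lam ≠ 0 := by
            intro h0
            rw [h0, abs_zero] at h1
            linarith
          positivity
        exact inv_anti₀ h4 h3
      have hpos : 0 < ∫ lam, ((zs - lam)^2)⁻¹ ∂μ := by
        have hml := MeasureTheory.integral_mono_ae (integrable_const _) hintsq hlb
        have hconst : ∫ _ : ℝ, ((|zs| + L + 1)^2)⁻¹ ∂μ = ((|zs| + L + 1)^2)⁻¹ := by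
          simp [measure_univ]
        rw [hconst] at hml
        have : (0:ℝ) < ((|zs| + L + 1)^2)⁻¹ := by positivity
        linarith
      linarith
    have hHtrfun : Htr = fun x => ∫ lam, (x - lam)⁻¹ ∂μ := funext hHtr
    have hHderiv : HasDerivAt Htr D zs := by
      rw [hHtrfun]
      have hder := hHder.2
      simpa using hder
    have hRcontAt : ContinuousAt (fun u => 1/u + R u) s := by
      apply ContinuousAt.add
      · exact continuousAt_const.div continuousAt_id hs0
      · exact hRcont.continuousAt (Icc_mem_nhds hsIcc.1 hsIcc.2)
    obtain ⟨U, hUopen, hsU, hUprop⟩ : ∃ U : Set ℝ, IsOpen U ∧ s ∈ U ∧ ∀ y ∈ U,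
        y ≠ 0 ∧ y ∈ Set.Ioo Hmin Hmax ∧ ((1/y + R y) < lmin ∨ lmax < (1/y + R y)) := by
      rcases hsmem with h | h
      · exact ⟨Set.Ioo 0 Hmax, isOpen_Ioo, h, fun y hy =>
          ⟨ne_of_gt hy.1, ⟨by linarith [hy.1], hy.2⟩, Or.inr (hzpos y hy)⟩⟩
      · exact ⟨Set.Ioo Hmin 0, isOpen_Ioo, h, fun y hy =>
          ⟨ne_of_lt hy.2, ⟨hy.1, by linarith [hy.2]⟩, Or.inl (hzneg y hy)⟩⟩
    have hfg : ∀ᶠ y in nhds s, Htr (1/y + R y) = y := by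
      filter_upwards [hUopen.mem_nhds hsU] with y hy
      obtain ⟨h1, h2, _⟩ := hUprop y hy
      exact hR y h2.1.le h2.2.le h1
    have hHderiv' : HasDerivAt Htr D (1/s + R s) := hzs ▸ hHderiv
    have hzd : HasDerivAt (fun u => 1/u + R u) D⁻¹ s :=
      HasDerivAt.of_local_left_inverse hRcontAt hHderiv' hD0.ne hfg
    set G : ℝ → ℝ := fun x => ∫ lam, Real.log (x - lam) ∂μ with hG
    have hGd : HasDerivAt (fun u => G (1/u + R u)) (s * D⁻¹) s := by
      have h1 : HasDerivAt G (∫ lam, (zs - lam)⁻¹ ∂μ) zs := hGder.2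
      have h2 : (∫ lam, (zs - lam)⁻¹ ∂μ) = s := by
        rw [← hHtr, hzs]
        exact hR s hsIcc.1.le hsIcc.2.le hs0
      have h1' : HasDerivAt G (∫ lam, (zs - lam)⁻¹ ∂μ) (1/s + R s) := hzs ▸ h1
      have h3 := h1'.comp s hzd
      rw [h2] at h3
      exact h3
    have hmul : HasDerivAt (fun u : ℝ => u * (1/u + R u)) (1 * (1/s + R s) + s * D⁻¹) s :=
      (hasDerivAt_id' s).mul hzd
    have hlogd : HasDerivAt Real.log s⁻¹ s := Real.hasDerivAt_log hs0
    have hBig : HasDerivAt (fun u => u * (1/u + R u) - 1 - Real.log u - G (1/u + R u))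
        ((1 * (1/s + R s) + s * D⁻¹) - s⁻¹ - s * D⁻¹) s :=
      ((hmul.sub_const 1).sub hlogd).sub hGd
    have hder_eq : (1 * (1/s + R s) + s * D⁻¹) - s⁻¹ - s * D⁻¹ = R s := by
      ring
    have heq : (fun u => u * R u - Φ u) =ᶠ[nhds s]
        (fun u => u * (1/u + R u) - 1 - Real.log u - G (1/u + R u)) := by
      filter_upwards [hUopen.mem_nhds hsU] with y hy
      obtain ⟨h1, _, h3⟩ := hUprop y hy
      have h4 := hPhiEq y h1 h3
      have h5 : y * (1/y + R y) = 1 + y * R y := by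
        field_simp
      simp only [hG]
      rw [h4, h5]
      ring
    exact hder_eq ▸ (hBig.congr_of_eventuallyEq heq)
  set F : ℝ → ℝ := fun u => u * R u - Φ u with hF
  have hF0 : F 0 = 0 := by
    rw [hF]
    simp [hΦ]
  -- conclusion
  intro t ht
  show F t = ∫ s in (0:ℝ)..t, R s
  rcases lt_trichotomy t 0 with htn | ht0 | htp
  · have hsub : Set.Icc t (0:ℝ) ⊆ Set.Icc Hmin Hmax :=
      Set.Icc_subset_Icc ht.1 (by linarith)
    have hcont' : ContinuousOn F (Set.Icc t 0) := hFcont.mono hsub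
    have hderiv : ∀ x ∈ Set.Ioo t (0:ℝ),
        HasDerivWithinAt F (R x) (Set.Ioi x) x :=
      fun x hx => (hFd x (Or.inr ⟨lt_of_le_of_lt ht.1 hx.1, hx.2⟩)).hasDerivWithinAt
    have hRint : IntervalIntegrable R MeasureTheory.volume t 0 := by
      apply ContinuousOn.intervalIntegrable
      rw [Set.uIcc_of_le htn.le]
      exact hRcont.mono hsub
    have hFTC := intervalIntegral.integral_eq_sub_of_hasDeriv_right_of_le htn.le
      hcont' hderiv hRint
    rw [hF0] at hFTC
    have hsymm : ∫ s in (0:ℝ)..t, R s = - ∫ s in t..(0:ℝ), R s :=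
      intervalIntegral.integral_symm t 0
    rw [hsymm, hFTC]
    ring
  · rw [ht0, intervalIntegral.integral_same]
    exact hF0
  · have hsub : Set.Icc (0:ℝ) t ⊆ Set.Icc Hmin Hmax :=
      Set.Icc_subset_Icc (by linarith) ht.2
    have hcont' : ContinuousOn F (Set.Icc 0 t) := hFcont.mono hsub
    have hderiv : ∀ x ∈ Set.Ioo (0:ℝ) t,
        HasDerivWithinAt F (R x) (Set.Ioi x) x :=
      fun x hx => (hFd x (Or.inl ⟨hx.1, lt_of_lt_of_le hx.2 ht.2⟩)).hasDerivWithinAt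
    have hRint : IntervalIntegrable R MeasureTheory.volume 0 t := by
      apply ContinuousOn.intervalIntegrable
      rw [Set.uIcc_of_le htp.le]
      exact hRcont.mono hsub
    have hFTC := intervalIntegral.integral_eq_sub_of_hasDeriv_right_of_le htp.le
      hcont' hderiv hRint
    rw [hF0, sub_zero] at hFTC
    exact hFTC.symm
end
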